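/- arXiv:1502.01434 — 3 statements merged into one kernel-verified Lean document; each statement's English description precedes it below -/
import Mathlib

section
/- Let n ≥ 3 and let G be a nonempty set of 2-element subsets of {1,…,n} (i.e., a set of edges of the complete graph K_n). Then G is an arrangement of smallest minors in Gr⁺(2,n) if and only if every pair of edges in G is non-crossing or shares a common vertex. -/
namespace Stmt0

/-- The `k×k` minor of a `k×n` matrix on the columns indexed by a `k`-element set `I`. -/
noncomputable def minorOn (k n : ℕ) (A : Matrix (Fin k) (Fin n) ℝ) (I : Finset (Fin n)) : ℝ :=
  if h : I.card = k then (A.submatrix id fun i => I.orderEmbOfFin h i).det else 0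

/-- 2x2 determinant of two plane vectors. -/
def det2 (v w : ℝ × ℝ) : ℝ := v.1 * w.2 - v.2 * w.1

lemma det2_combo (p q p' q' : ℝ) (C D X Y : ℝ × ℝ) :
    det2 (p • C + q • D) (p' • X + q' • Y) =
      p * p' * det2 C X + p * q' * det2 C Y + q * p' * det2 D X + q * q' * det2 D Y := by
  simp only [det2, Prod.fst_add, Prod.snd_add, Prod.smul_fst, Prod.smul_snd, smul_eq_mul]
  ring

lemma pluecker (a b c d : ℝ × ℝ) :
    det2 a c * det2 b d = det2 a b * det2 c d + det2 a d * det2 b c := by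
  simp only [det2]; ring

/-- orderEmbOfFin of a doubleton. -/
lemma orderEmb_pair {n : ℕ} (i j : Fin n) (hij : i < j)
    (h : ({i, j} : Finset (Fin n)).card = 2) :
    ({i, j} : Finset (Fin n)).orderEmbOfFin h 0 = i ∧
    ({i, j} : Finset (Fin n)).orderEmbOfFin h 1 = j := by
  have h0 : ({i, j} : Finset (Fin n)).orderEmbOfFin h 0 ∈ ({i, j} : Finset (Fin n)) :=
    Finset.orderEmbOfFin_mem _ h 0
  have h1 : ({i, j} : Finset (Fin n)).orderEmbOfFin h 1 ∈ ({i, j} : Finset (Fin n)) :=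
    Finset.orderEmbOfFin_mem _ h 1
  have hlt : ({i, j} : Finset (Fin n)).orderEmbOfFin h 0 < ({i, j} : Finset (Fin n)).orderEmbOfFin h 1 := by
    apply OrderEmbedding.strictMono
    exact (by norm_num : (0 : Fin 2) < 1)
  simp only [Finset.mem_insert, Finset.mem_singleton] at h0 h1
  rcases h0 with h0 | h0 <;> rcases h1 with h1 | h1
  · rw [h0, h1] at hlt; exact absurd hlt (lt_irrefl _)
  · exact ⟨h0, h1⟩
  · rw [h0, h1] at hlt; exact absurd hij (not_lt.2 hlt.le)
  · rw [h0, h1] at hlt; exact absurd hlt (lt_irrefl _)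

example : True := trivial

lemma card_pair_fin {n : ℕ} {i j : Fin n} (hij : i < j) : ({i, j} : Finset (Fin n)).card = 2 := by
  rw [Finset.card_insert_of_notMem (by simp [hij.ne]), Finset.card_singleton]

/-- column vector of a 2×n matrix -/
def col {n : ℕ} (A : Matrix (Fin 2) (Fin n) ℝ) (j : Fin n) : ℝ × ℝ := (A 0 j, A 1 j)

lemma minor_pair {n : ℕ} (A : Matrix (Fin 2) (Fin n) ℝ) {i j : Fin n} (hij : i < j) :
    minorOn 2 n A {i, j} = det2 (col A i) (col A j) := by
  have h : ({i, j} : Finset (Fin n)).card = 2 := card_pair_fin hij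
  have he := orderEmb_pair i j hij h
  rw [minorOn, dif_pos h, Matrix.det_fin_two]
  simp only [Matrix.submatrix_apply, id_eq, he.1, he.2, det2, col]
  ring

/-- `A` represents a point of the positive Grassmannian `Gr⁺(k,n)`:
all maximal `k×k` minors are positive. -/
def PosGr (k n : ℕ) (A : Matrix (Fin k) (Fin n) ℝ) : Prop :=
  ∀ I : Finset (Fin n), I.card = k → 0 < minorOn k n A I

/-- An arrangement of smallest minors in `Gr⁺(k,n)`. -/
def IsArrSmallest (k n : ℕ) (𝒥 : Finset (Finset (Fin n))) : Prop :=
  𝒥.Nonempty ∧ (∀ I ∈ 𝒥, I.card = k) ∧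
    ∃ A : Matrix (Fin k) (Fin n) ℝ, PosGr k n A ∧
      (∀ I ∈ 𝒥, ∀ J ∈ 𝒥, minorOn k n A I = minorOn k n A J) ∧
      ∀ K : Finset (Fin n), K.card = k → K ∉ 𝒥 → ∀ I ∈ 𝒥, minorOn k n A I < minorOn k n A K

/-- Two edges of `K_n` are crossing. -/
def Crossing {n : ℕ} (e f : Finset (Fin n)) : Prop :=
  ∃ a b c d : Fin n, a < b ∧ c < d ∧ e = {a, b} ∧ f = {c, d} ∧
    ((a < c ∧ c < b ∧ b < d) ∨ (c < a ∧ a < d ∧ d < b))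

lemma forward_dir {n : ℕ} (G : Finset (Finset (Fin n))) (hG : IsArrSmallest 2 n G) :
    ∀ e ∈ G, ∀ f ∈ G, (e ∩ f).Nonempty ∨ ¬ Crossing e f := by
  obtain ⟨hne, hcard, A, hpos, heq, hmin⟩ := hG
  -- every pair-minor is ≥ the common value m of minors on G
  intro e he f hf
  right
  rintro ⟨a, b, c, d, hab, hcd, he', hf', hcase⟩
  set m : ℝ := minorOn 2 n A e with hm
  have hmf : minorOn 2 n A f = m := heq f hf e he
  have hmpos : 0 < m := hpos e (hcard e he)
  have hge : ∀ x y : Fin n, x < y → m ≤ minorOn 2 n A {x, y} := by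
    intro x y hxy
    by_cases hmem : ({x, y} : Finset (Fin n)) ∈ G
    · exact le_of_eq (heq e he _ hmem)
    · exact le_of_lt (hmin _ (card_pair_fin hxy) hmem e he)
  -- sorted quadruple p < q < r < s with {p,r} and {q,s} the two equal-minor edges
  have core : ∀ p q r s : Fin n, p < q → q < r → r < s →
      minorOn 2 n A {p, r} = m → minorOn 2 n A {q, s} = m → False := by
    intro p q r s h1 h2 h3 hpr hqs
    have e1 := minor_pair A (h1.trans h2)       -- {p,r}
    have e2 := minor_pair A (h2.trans h3)       -- {q,s}
    have e3 := minor_pair A h1                  -- {p,q}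
    have e4 := minor_pair A h3                  -- {r,s}
    have e5 := minor_pair A ((h1.trans h2).trans h3) -- {p,s}
    have e6 := minor_pair A h2                  -- {q,r}
    have hp := pluecker (col A p) (col A q) (col A r) (col A s)
    have g3 := hge p q h1
    have g4 := hge r s h3
    have g5 := hge p s ((h1.trans h2).trans h3)
    have g6 := hge q r h2
    rw [← e3] at hp; rw [← e4] at hp; rw [← e5] at hp; rw [← e6] at hp
    rw [← e1, ← e2] at hp
    rw [hpr, hqs] at hp
    nlinarith [mul_le_mul g3 g4 (le_of_lt hmpos) (le_of_lt (lt_of_lt_of_le hmpos g3)),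
      mul_le_mul g5 g6 (le_of_lt hmpos) (le_of_lt (lt_of_lt_of_le hmpos g5))]
  rcases hcase with ⟨h1, h2, h3⟩ | ⟨h1, h2, h3⟩
  · exact core a c b d h1 h2 h3 (by rw [← he']) (by rw [← hf', hmf])
  · exact core c a d b h1 h2 h3 (by rw [← hf', hmf]) (by rw [← he'])

open Real Finset

lemma arsinh_pos' {x : ℝ} (hx : 0 < x) : 0 < Real.arsinh x := by
  have := Real.arsinh_lt_arsinh.mpr hx
  rwa [Real.arsinh_zero] at this

lemma expdet (α β a b : ℝ) :
    α * Real.exp (-a) * (β * Real.exp b) - α * Real.exp (-b) * (β * Real.exp a)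
      = α * β * (Real.exp (b - a) - Real.exp (a - b)) := by
  rw [show b - a = b + -a by ring, show a - b = a + -b by ring, Real.exp_add, Real.exp_add]
  ring

lemma two_sinh_eq (x : ℝ) : Real.exp x - Real.exp (-x) = 2 * Real.sinh x := by
  rw [Real.sinh_eq]; ring

lemma chain_exists (r : ℕ) (hr : 1 ≤ r) (τ : ℕ → ℝ) (hτ : ∀ i, 1 ≤ τ i) :
    ∃ P Q : ℕ → ℝ,
      P 0 = 1 ∧ Q 0 = 0 ∧ P (r+1) = 0 ∧ Q (r+1) = 1 ∧
      (∀ k, 1 ≤ k → k ≤ r → 1 ≤ P k ∧ 1 ≤ Q k) ∧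
      (∀ k, 0 ≤ P k) ∧ (∀ k, 0 ≤ Q k) ∧
      (∀ k, k ≤ r → P k * Q (k+1) - P (k+1) * Q k = τ k) ∧
      (∀ k m, k + 1 < m → m ≤ r + 1 → ¬(k = 0 ∧ m = r + 1) →
        1 < P k * Q m - P m * Q k) := by
  classical
  have hτpos : ∀ i, (0:ℝ) < τ i := fun i => lt_of_lt_of_le one_pos (hτ i)
  let dd : ℝ → ℕ → ℝ := fun γ i => Real.arsinh (τ i / (2 * γ))
  let S : ℝ → ℝ := fun γ => ∑ i ∈ Finset.Ico 1 r, dd γ i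
  let E : ℝ → ℝ := fun γ => τ 0 * τ r * Real.exp (S γ)
  have hEdef : ∀ γ, E γ = τ 0 * τ r * Real.exp (S γ) := fun _ => rfl
  have hSdef : ∀ γ, S γ = ∑ i ∈ Finset.Ico 1 r, Real.arsinh (τ i / (2 * γ)) := fun _ => rfl
  have hSnonneg : ∀ γ : ℝ, 0 < γ → 0 ≤ S γ := by
    intro γ hγ
    rw [hSdef]
    apply Finset.sum_nonneg
    intro i _
    exact (arsinh_pos' (div_pos (hτpos i) (by linarith))).le
  have hE1 : 1 ≤ E 1 := by
    rw [hEdef]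
    have h1 : (1:ℝ) ≤ τ 0 * τ r := one_le_mul_of_one_le_of_one_le (hτ 0) (hτ r)
    have h2 : (1:ℝ) ≤ Real.exp (S 1) := by
      have := Real.exp_le_exp.2 (hSnonneg 1 one_pos)
      rwa [Real.exp_zero] at this
    nlinarith
  have hEanti : ∀ γ, 1 ≤ γ → E γ ≤ E 1 := by
    intro γ hγ
    rw [hEdef, hEdef]
    have hs : S γ ≤ S 1 := by
      rw [hSdef, hSdef]
      apply Finset.sum_le_sum
      intro i _
      apply Real.arsinh_le_arsinh.2
      rw [div_le_div_iff₀ (by linarith) (by norm_num)]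
      nlinarith [hτpos i]
    have := Real.exp_le_exp.2 hs
    nlinarith [Real.exp_pos (S γ), mul_pos (hτpos 0) (hτpos r)]
  have hcont : ContinuousOn (fun γ => E γ - γ) (Set.Icc 1 (E 1)) := by
    apply ContinuousOn.sub _ continuousOn_id
    apply ContinuousOn.mul continuousOn_const
    apply Real.continuous_exp.comp_continuousOn
    apply continuousOn_finset_sum
    intro i _
    apply Real.continuous_arsinh.comp_continuousOn
    apply ContinuousOn.div continuousOn_const
    · exact (continuous_const.mul continuous_id).continuousOn
    · intro x hx
      have : (1:ℝ) ≤ x := hx.1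
      positivity
  obtain ⟨γ, hγmem, hγeq⟩ : ∃ γ ∈ Set.Icc (1:ℝ) (E 1), E γ - γ = 0 := by
    have hsub := intermediate_value_Icc' hE1 hcont
    have h0mem : (0:ℝ) ∈ Set.Icc (E (E 1) - E 1) (E 1 - 1) := by
      constructor
      · have := hEanti (E 1) hE1; linarith
      · linarith
    obtain ⟨γ, hγ, hγ2⟩ := hsub h0mem
    exact ⟨γ, hγ, hγ2⟩
  have hγ1 : 1 ≤ γ := hγmem.1
  have hγpos : (0:ℝ) < γ := lt_of_lt_of_le one_pos hγ1
  have hEγ : E γ = γ := by linarith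
  -- exponents
  let d : ℕ → ℝ := fun i => Real.arsinh (τ i / (2 * γ))
  have hsinh : ∀ i, Real.exp (d i) - Real.exp (-(d i)) = τ i / γ := by
    intro i
    rw [two_sinh_eq, Real.sinh_arsinh]
    field_simp
  have hdpos : ∀ i, 0 < d i := fun i => arsinh_pos' (div_pos (hτpos i) (by linarith))
  let s : ℕ → ℝ := fun k => ∑ i ∈ Finset.Ico 1 k, d i
  have hsdef : ∀ k, s k = ∑ i ∈ Finset.Ico 1 k, d i := fun _ => rfl
  have hs1 : s 1 = 0 := by rw [hsdef]; simp
  have hsr : s r = S γ := by rw [hsdef, hSdef]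
  have hsplit : ∀ k m, 1 ≤ k → k ≤ m → s m = s k + ∑ i ∈ Finset.Ico k m, d i := by
    intro k m h1 h2
    rw [hsdef, hsdef, ← Finset.sum_Ico_consecutive d h1 h2]
  have hsmono : ∀ k m, 1 ≤ k → k ≤ m → s k ≤ s m := by
    intro k m h1 h2
    rw [hsplit k m h1 h2]
    have : 0 ≤ ∑ i ∈ Finset.Ico k m, d i := Finset.sum_nonneg fun i _ => (hdpos i).le
    linarith
  have hsmono' : ∀ k m, 1 ≤ k → k < m → s k + d k ≤ s m := by
    intro k m h1 h2
    rw [hsplit k m h1 h2.le]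
    have : d k ≤ ∑ i ∈ Finset.Ico k m, d i :=
      Finset.single_le_sum (fun i _ => (hdpos i).le) (Finset.mem_Ico.2 ⟨le_refl k, h2⟩)
    linarith
  have hs0le : ∀ k, 1 ≤ k → 0 ≤ s k := by
    intro k h1
    have := hsmono 1 k le_rfl h1
    rwa [hs1] at this
  let α : ℝ := τ r * Real.exp (s r)
  let β : ℝ := τ 0
  have hαdef : α = τ r * Real.exp (s r) := rfl
  have hβdef : β = τ 0 := rfl
  have hαβ : α * β = γ := by
    rw [hαdef, hβdef, hsr]
    conv_rhs => rw [← hEγ]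
    rw [hEdef]; ring
  have hαpos : 0 < α := mul_pos (hτpos r) (Real.exp_pos _)
  have hβpos : 0 < β := hτpos 0
  -- the chain coordinate functions
  let P : ℕ → ℝ := fun k => if k = 0 then 1 else if k = r+1 then 0 else α * Real.exp (-(s k))
  let Q : ℕ → ℝ := fun k => if k = 0 then 0 else if k = r+1 then 1 else β * Real.exp (s k)
  have hP0 : P 0 = 1 := rfl
  have hQ0 : Q 0 = 0 := rfl
  have hPlast : P (r+1) = 0 := by simp [P]
  have hQlast : Q (r+1) = 1 := by simp [Q]
  have hPmid : ∀ k, 1 ≤ k → k ≤ r → P k = α * Real.exp (-(s k)) := by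
    intro k h1 h2
    simp only [P, if_neg (by omega : k ≠ 0), if_neg (by omega : k ≠ r+1)]
  have hQmid : ∀ k, 1 ≤ k → k ≤ r → Q k = β * Real.exp (s k) := by
    intro k h1 h2
    simp only [Q, if_neg (by omega : k ≠ 0), if_neg (by omega : k ≠ r+1)]
  refine ⟨P, Q, hP0, hQ0, hPlast, hQlast, ?_, ?_, ?_, ?_, ?_⟩
  · -- middle coordinates at least 1
    intro k h1 h2
    rw [hPmid k h1 h2, hQmid k h1 h2]
    constructor
    · have h' : s k ≤ s r := hsmono k r h1 h2
      rw [hαdef, mul_assoc, ← Real.exp_add]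
      have : (1:ℝ) ≤ Real.exp (s r + -(s k)) := by
        have := Real.exp_le_exp.2 (show (0:ℝ) ≤ s r + -(s k) by linarith)
        rwa [Real.exp_zero] at this
      nlinarith [hτ r]
    · have h' := hs0le k h1
      have : (1:ℝ) ≤ Real.exp (s k) := by
        have := Real.exp_le_exp.2 h'
        rwa [Real.exp_zero] at this
      rw [hβdef]; nlinarith [hτ 0]
  · -- P nonneg
    intro k
    rcases eq_or_ne k 0 with h | h
    · simp [P, h]
    rcases eq_or_ne k (r+1) with h2 | h2
    · simp [P, h, h2]
    · simp only [P, if_neg h, if_neg h2]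
      positivity
  · -- Q nonneg
    intro k
    rcases eq_or_ne k 0 with h | h
    · simp [Q, h]
    rcases eq_or_ne k (r+1) with h2 | h2
    · simp [Q, h, h2]
    · simp only [Q, if_neg h, if_neg h2]
      positivity
  · -- consecutive dets
    intro k hk
    rcases eq_or_ne k 0 with h0 | h0
    · subst h0
      rw [hP0, hQ0, hQmid 1 le_rfl hr, hPmid 1 le_rfl hr, hβdef, hs1]
      simp
    · rcases eq_or_ne (k+1) (r+1) with h1 | h1
      · have hk' : k = r := by omega
        subst hk'
        rw [hPlast, hQlast, hPmid k (by omega) le_rfl, hQmid k (by omega) le_rfl, hαdef]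
        rw [mul_one, mul_assoc, ← Real.exp_add]
        simp
      · have hk1 : 1 ≤ k := by omega
        have hk2 : k + 1 ≤ r := by omega
        rw [hPmid k hk1 (by omega), hQmid k hk1 (by omega),
            hPmid (k+1) (by omega) hk2, hQmid (k+1) (by omega) hk2]
        rw [expdet]
        have hsd : s (k+1) - s k = d k := by
          have h := hsplit k (k+1) hk1 (by omega)
          have h2 : ∑ i ∈ Finset.Ico k (k+1), d i = d k := by simp
          rw [h, h2]; ring
        have hsd' : s k - s (k+1) = -(d k) := by rw [← neg_sub, hsd]
        rw [hsd, hsd', hsinh k, hαβ]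
        field_simp
  · -- strict bounds for non-consecutive pairs
    intro k m hkm hm hne
    rcases eq_or_ne k 0 with h0 | h0
    · subst h0
      have hmr : m ≤ r := by
        rcases eq_or_ne m (r+1) with h | h
        · exact absurd ⟨rfl, h⟩ hne
        · omega
      have hm2 : 2 ≤ m := by omega
      rw [hP0, hQ0, hPmid m (by omega) hmr, hQmid m (by omega) hmr]
      have hspos : 0 < s m := by
        have := hsmono' 1 m le_rfl (by omega)
        rw [hs1] at this; linarith [hdpos 1]
      have h1e : (1:ℝ) < Real.exp (s m) := by
        have := Real.exp_lt_exp.2 hspos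
        rwa [Real.exp_zero] at this
      rw [hβdef]
      have hP : 0 < α * Real.exp (-(s m)) := by positivity
      nlinarith [hτ 0]
    · rcases eq_or_ne m (r+1) with h1 | h1
      · subst h1
        have hkr : k < r := by omega
        have hk1 : 1 ≤ k := by omega
        rw [hPlast, hQlast, hPmid k hk1 hkr.le, hQmid k hk1 hkr.le, hαdef]
        have hslt : s k < s r := by
          have := hsmono' k r hk1 hkr; linarith [hdpos k]
        have h1e : (1:ℝ) < Real.exp (s r) * Real.exp (-(s k)) := by
          rw [← Real.exp_add]
          have := Real.exp_lt_exp.2 (show (0:ℝ) < s r + -(s k) by linarith)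
          rwa [Real.exp_zero] at this
        have hQk : (0:ℝ) ≤ β * Real.exp (s k) := by positivity
        nlinarith [hτ r]
      · -- middle pair
        have hk1 : 1 ≤ k := by omega
        have hmr : m ≤ r := by omega
        have hm1 : 1 ≤ m := by omega
        rw [hPmid k hk1 (by omega), hQmid k hk1 (by omega), hPmid m hm1 hmr, hQmid m hm1 hmr]
        rw [expdet, hαβ]
        have hgap : d k < s m - s k := by
          have ha := hsplit k m hk1 (by omega)
          have hsingle : d k + d (k+1) ≤ ∑ i ∈ Finset.Ico k m, d i := by
            have : ({k, k+1} : Finset ℕ) ⊆ Finset.Ico k m := by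
              intro x hx
              simp only [Finset.mem_insert, Finset.mem_singleton] at hx
              rcases hx with h | h <;> subst h <;> exact Finset.mem_Ico.2 (by omega)
            have := Finset.sum_le_sum_of_subset_of_nonneg this
              (fun i _ _ => (hdpos i).le)
            rwa [Finset.sum_pair (by omega : k ≠ k+1)] at this
          linarith [hdpos (k+1)]
        have hτk := hτ k
        have hsinhlt : τ k / γ < Real.exp (s m - s k) - Real.exp (-(s m - s k)) := by
          rw [← hsinh k, two_sinh_eq, two_sinh_eq]
          have := Real.sinh_lt_sinh.2 hgap
          linarith
        have hexp : Real.exp (s k - s m) = Real.exp (-(s m - s k)) := by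
          congr 1; ring
        rw [hexp]
        have hτγ : 1 ≤ τ k / γ * γ := by
          rw [div_mul_cancel₀ _ (ne_of_gt hγpos)]
          exact hτ k
        calc (1:ℝ) ≤ τ k / γ * γ := hτγ
          _ < (Real.exp (s m - s k) - Real.exp (-(s m - s k))) * γ := by
              apply mul_lt_mul_of_pos_right hsinhlt hγpos
          _ = γ * (Real.exp (s m - s k) - Real.exp (-(s m - s k))) := by ring

/-! ## Graph structure layer -/

section Graph

open scoped Classical

variable {N : ℕ}

/-- no two edges cross -/
def NC (H : Finset (Finset (Fin N))) : Prop :=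
  ∀ a b c d : Fin N, a < b → c < d → ({a, b} : Finset (Fin N)) ∈ H →
    ({c, d} : Finset (Fin N)) ∈ H → a < c → c < b → b < d → False

/-- `z` is covered inside the interval `[a,b]` by a proper edge -/
def Cov (H : Finset (Finset (Fin N))) (a b z : Fin N) : Prop :=
  ∃ c d : Fin N, a ≤ c ∧ c < z ∧ z < d ∧ d ≤ b ∧ ¬(c = a ∧ d = b) ∧
    ({c, d} : Finset (Fin N)) ∈ H

/-- the uncovered (level-one) vertices strictly inside `[a,b]` -/
noncomputable def WS (H : Finset (Finset (Fin N))) (a b : Fin N) : Finset (Fin N) :=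
  (Finset.Ioo a b).filter (fun z => ¬ Cov H a b z)

lemma WS_subset (H : Finset (Finset (Fin N))) (a b : Fin N) :
    WS H a b ⊆ Finset.Ioo a b := Finset.filter_subset _ _

lemma WS_not_cov {H : Finset (Finset (Fin N))} {a b z : Fin N}
    (hz : z ∈ WS H a b) : ¬ Cov H a b z := (Finset.mem_filter.1 hz).2

lemma mem_WS {H : Finset (Finset (Fin N))} {a b z : Fin N}
    (hz : z ∈ Finset.Ioo a b) (h2 : ¬ Cov H a b z) : z ∈ WS H a b :=
  Finset.mem_filter.2 ⟨hz, h2⟩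

lemma cov_of_not_WS {H : Finset (Finset (Fin N))} {a b z : Fin N}
    (hz : z ∈ Finset.Ioo a b) (h2 : z ∉ WS H a b) : Cov H a b z := by
  by_contra h
  exact h2 (mem_WS hz h)

/-- a covered vertex is covered by an edge whose endpoints are level-one or boundary,
with no level-one vertex strictly inside it -/
lemma cov_max {H : Finset (Finset (Fin N))} (hNC : NC H) {a b z : Fin N}
    (hcov : Cov H a b z) :
    ∃ c d : Fin N, a ≤ c ∧ c < z ∧ z < d ∧ d ≤ b ∧ ¬(c = a ∧ d = b) ∧
      ({c, d} : Finset (Fin N)) ∈ H ∧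
      (c = a ∨ c ∈ WS H a b) ∧ (d = b ∨ d ∈ WS H a b) ∧
      (∀ w ∈ WS H a b, ¬(c < w ∧ w < d)) := by
  classical
  set PF : Finset (Fin N × Fin N) :=
    (Finset.univ ×ˢ Finset.univ).filter
      (fun cd => a ≤ cd.1 ∧ cd.1 < z ∧ z < cd.2 ∧ cd.2 ≤ b ∧ ¬(cd.1 = a ∧ cd.2 = b) ∧
        ({cd.1, cd.2} : Finset (Fin N)) ∈ H) with hPF
  have hPFmem : ∀ cd : Fin N × Fin N, cd ∈ PF ↔
      (a ≤ cd.1 ∧ cd.1 < z ∧ z < cd.2 ∧ cd.2 ≤ b ∧ ¬(cd.1 = a ∧ cd.2 = b) ∧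
        ({cd.1, cd.2} : Finset (Fin N)) ∈ H) := by
    intro cd
    simp [hPF]
  have hne : PF.Nonempty := by
    obtain ⟨c, d, h1, h2, h3, h4, h5, h6⟩ := hcov
    exact ⟨(c, d), (hPFmem (c, d)).2 ⟨h1, h2, h3, h4, h5, h6⟩⟩
  obtain ⟨cd, hcd, hmax⟩ := PF.exists_max_image (fun cd => (Finset.Ioo cd.1 cd.2).card) hne
  obtain ⟨h1, h2, h3, h4, h5, h6⟩ := (hPFmem cd).1 hcd
  set c := cd.1
  set d := cd.2
  have hzb : z < b := lt_of_lt_of_le h3 h4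
  have haz : a < z := lt_of_le_of_lt h1 h2
  -- c is level-one or a
  have hcW : c = a ∨ c ∈ WS H a b := by
    by_cases hca : c = a
    · exact Or.inl hca
    right
    apply mem_WS (Finset.mem_Ioo.2 ⟨lt_of_le_of_ne h1 (Ne.symm hca), lt_trans h2 hzb⟩)
    rintro ⟨c', d', k1, k2, k3, k4, k5, k6⟩
    -- noncrossing forces d ≤ d'
    have hdd' : d ≤ d' := by
      by_contra hlt
      push_neg at hlt
      exact hNC c' d' c d (lt_trans k2 k3) (lt_trans h2 h3) k6 h6 k2 k3 hlt
    have hmem : (c', d') ∈ PF := by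
      apply (hPFmem (c', d')).2
      exact ⟨k1, lt_trans k2 h2, lt_of_lt_of_le h3 hdd', k4, k5, k6⟩
    have hcardle := hmax (c', d') hmem
    have hss : Finset.Ioo c d ⊂ Finset.Ioo c' d' := by
      constructor
      · intro x hx
        rw [Finset.mem_Ioo] at hx ⊢
        exact ⟨lt_trans k2 hx.1, lt_of_lt_of_le hx.2 hdd'⟩
      · intro hsub
        have : c ∈ Finset.Ioo c' d' := Finset.mem_Ioo.2 ⟨k2, k3⟩
        have hc2 : c ∈ Finset.Ioo c d := by
          by_contra hc3
          have := hsub this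
          exact hc3 this
        rw [Finset.mem_Ioo] at hc2
        exact absurd hc2.1 (lt_irrefl c)
    exact absurd hcardle (not_le.2 (Finset.card_lt_card hss))
  -- d is level-one or b
  have hdW : d = b ∨ d ∈ WS H a b := by
    by_cases hdb : d = b
    · exact Or.inl hdb
    right
    apply mem_WS (Finset.mem_Ioo.2 ⟨lt_trans haz h3, lt_of_le_of_ne h4 hdb⟩)
    rintro ⟨c', d', k1, k2, k3, k4, k5, k6⟩
    have hcc' : c' ≤ c := by
      by_contra hlt
      push_neg at hlt
      exact hNC c d c' d' (lt_trans h2 h3) (lt_trans k2 k3) h6 k6 hlt k2 k3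
    have hmem : (c', d') ∈ PF := by
      apply (hPFmem (c', d')).2
      exact ⟨k1, lt_of_le_of_lt hcc' h2, lt_trans h3 k3, k4, k5, k6⟩
    have hcardle := hmax (c', d') hmem
    have hss : Finset.Ioo c d ⊂ Finset.Ioo c' d' := by
      constructor
      · intro x hx
        rw [Finset.mem_Ioo] at hx ⊢
        exact ⟨lt_of_le_of_lt hcc' hx.1, lt_trans hx.2 k3⟩
      · intro hsub
        have : d ∈ Finset.Ioo c' d' := Finset.mem_Ioo.2 ⟨k2, k3⟩
        have hd2 : d ∈ Finset.Ioo c d := by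
          by_contra hd3
          have := hsub this
          exact hd3 this
        rw [Finset.mem_Ioo] at hd2
        exact absurd hd2.2 (lt_irrefl d)
    exact absurd hcardle (not_le.2 (Finset.card_lt_card hss))
  refine ⟨c, d, h1, h2, h3, h4, h5, h6, hcW, hdW, ?_⟩
  intro w hw ⟨hw1, hw2⟩
  exact WS_not_cov hw ⟨c, d, h1, hw1, hw2, h4, h5, h6⟩

end Graph

section ChainIndex

variable {N : ℕ}

/-- the chain `a = g 0 < g 1 < ... < g r < g (r+1) = b` where `g 1, ..., g r`
enumerates `W` in increasing order -/
noncomputable def gfun (a b : Fin N) (W : Finset (Fin N)) : ℕ → Fin N :=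
  fun k => if hk : k = 0 then a else
    if h : k ≤ W.card then W.orderEmbOfFin rfl ⟨k - 1, by omega⟩ else b

variable {a b : Fin N} {W : Finset (Fin N)} (hab : a < b)
  (hWsub : W ⊆ Finset.Ioo a b)

lemma gfun_zero : gfun a b W 0 = a := by simp [gfun]

lemma gfun_last : gfun a b W (W.card + 1) = b := by
  simp only [gfun, dif_neg (Nat.succ_ne_zero _), dif_neg (by omega : ¬ W.card + 1 ≤ W.card)]

lemma gfun_mem {k : ℕ} (h1 : 1 ≤ k) (h2 : k ≤ W.card) : gfun a b W k ∈ W := by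
  simp only [gfun, dif_neg (by omega : k ≠ 0), dif_pos h2]
  exact Finset.orderEmbOfFin_mem _ _ _

include hWsub in
lemma gfun_mem_Ioo {k : ℕ} (h1 : 1 ≤ k) (h2 : k ≤ W.card) :
    a < gfun a b W k ∧ gfun a b W k < b := by
  have := hWsub (gfun_mem (a := a) (b := b) h1 h2)
  exact Finset.mem_Ioo.1 this

include hab hWsub in
lemma gfun_mono {k m : ℕ} (hkm : k < m) (hm : m ≤ W.card + 1) :
    gfun a b W k < gfun a b W m := by
  rcases eq_or_ne k 0 with hk0 | hk0
  · subst hk0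
    rw [gfun_zero]
    rcases eq_or_ne m (W.card + 1) with hm1 | hm1
    · rw [hm1, gfun_last]; exact hab
    · exact (gfun_mem_Ioo hWsub (by omega) (by omega)).1
  · rcases eq_or_ne m (W.card + 1) with hm1 | hm1
    · subst hm1
      rw [gfun_last]
      exact (gfun_mem_Ioo hWsub (by omega) (by omega)).2
    · have h2 : k ≤ W.card := by omega
      have h3 : m ≤ W.card := by omega
      simp only [gfun, dif_neg hk0, dif_neg (by omega : m ≠ 0), dif_pos h2, dif_pos h3]
      apply OrderEmbedding.strictMono
      simp only [Fin.mk_lt_mk]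
      omega

include hab hWsub in
lemma gfun_mono_le {k m : ℕ} (hkm : k ≤ m) (hm : m ≤ W.card + 1) :
    gfun a b W k ≤ gfun a b W m := by
  rcases eq_or_ne k m with h | h
  · subst h; exact le_refl _
  · exact (gfun_mono hab hWsub (by omega) hm).le

include hab hWsub in
lemma gfun_reflect {k m : ℕ} (hk : k ≤ W.card + 1) (hm : m ≤ W.card + 1)
    (h : gfun a b W k < gfun a b W m) : k < m := by
  by_contra h2
  push_neg at h2
  exact absurd h (not_lt.2 (gfun_mono_le hab hWsub h2 hk))

include hab hWsub in
lemma gfun_inj {k m : ℕ} (hk : k ≤ W.card + 1) (hm : m ≤ W.card + 1)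
    (h : gfun a b W k = gfun a b W m) : k = m := by
  rcases lt_trichotomy k m with hlt | he | hgt
  · exact absurd h (ne_of_lt (gfun_mono hab hWsub hlt hm))
  · exact he
  · exact absurd h.symm (ne_of_lt (gfun_mono hab hWsub hgt hk))

lemma gfun_surj {w : Fin N} (hw : w ∈ W) :
    ∃ k, 1 ≤ k ∧ k ≤ W.card ∧ gfun a b W k = w := by
  have : w ∈ Set.range (W.orderEmbOfFin rfl) := by
    rw [Finset.range_orderEmbOfFin]
    exact hw
  obtain ⟨⟨iv, hiv⟩, hi⟩ := this
  refine ⟨iv + 1, by omega, by omega, ?_⟩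
  simp only [gfun, dif_neg (Nat.succ_ne_zero _), dif_pos (by omega : iv + 1 ≤ W.card)]
  rw [← hi]
  congr 1

end ChainIndex

/-! ## The main recursive construction -/

lemma det2_self (v : ℝ × ℝ) : det2 v v = 0 := by simp [det2]; ring

lemma det2_rlin (p q : ℝ) (X Y Z : ℝ × ℝ) :
    det2 X (p • Y + q • Z) = p * det2 X Y + q * det2 X Z := by
  simp only [det2, Prod.fst_add, Prod.snd_add, Prod.smul_fst, Prod.smul_snd, smul_eq_mul]
  ring

lemma det2_llin (p q : ℝ) (X Y Z : ℝ × ℝ) :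
    det2 (p • Y + q • Z) X = p * det2 Y X + q * det2 Z X := by
  simp only [det2, Prod.fst_add, Prod.snd_add, Prod.smul_fst, Prod.smul_snd, smul_eq_mul]
  ring

/-- base case of the interval construction : empty interior -/
lemma INT_empty {N : ℕ} {H : Finset (Finset (Fin N))} {a b : Fin N} (hab : a < b)
    (habH : ({a, b} : Finset (Fin N)) ∈ H) (C D : ℝ × ℝ) (hCD : det2 C D = 1)
    (hIoo : Finset.Ioo a b = ∅) :
    ∃ V : Fin N → ℝ × ℝ, V a = C ∧ V b = D ∧
      (∀ z, a < z → z < b → ∃ p q : ℝ, 1 ≤ p ∧ 1 ≤ q ∧ V z = p • C + q • D) ∧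
      (∀ i j, a ≤ i → i < j → j ≤ b →
        1 ≤ det2 (V i) (V j) ∧ (det2 (V i) (V j) = 1 ↔ ({i, j} : Finset (Fin N)) ∈ H)) := by
  classical
  refine ⟨fun z => if z = a then C else D, by simp, by simp [hab.ne'], ?_, ?_⟩
  · intro z h1 h2
    exact absurd (Finset.mem_Ioo.2 ⟨h1, h2⟩) (by simp [hIoo])
  · intro i j hai hij hjb
    have hia : i = a := by
      by_contra h
      have : i ∈ Finset.Ioo a b :=
        Finset.mem_Ioo.2 ⟨lt_of_le_of_ne hai (Ne.symm h), lt_of_lt_of_le hij hjb⟩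
      simp [hIoo] at this
    have hjb' : j = b := by
      by_contra h
      have : j ∈ Finset.Ioo a b :=
        Finset.mem_Ioo.2 ⟨lt_of_le_of_lt (hia ▸ le_refl a) hij, lt_of_le_of_ne hjb h⟩
      simp [hIoo] at this
    rw [hia, hjb']
    have e1 : (fun z => if z = a then C else D) a = C := by simp
    have e2 : (fun z => if z = a then C else D) b = D := by simp [hab.ne']
    rw [e1, e2, hCD]
    exact ⟨le_refl 1, by simp [habH]⟩

lemma INT {N : ℕ} {H : Finset (Finset (Fin N))} (hNC : NC H) :
    ∀ n : ℕ, ∀ a b : Fin N, (Finset.Ioo a b).card ≤ n → a < b →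
      ({a, b} : Finset (Fin N)) ∈ H → ∀ C D : ℝ × ℝ, det2 C D = 1 →
      ∃ V : Fin N → ℝ × ℝ, V a = C ∧ V b = D ∧
        (∀ z, a < z → z < b → ∃ p q : ℝ, 1 ≤ p ∧ 1 ≤ q ∧ V z = p • C + q • D) ∧
        (∀ i j, a ≤ i → i < j → j ≤ b →
          1 ≤ det2 (V i) (V j) ∧ (det2 (V i) (V j) = 1 ↔ ({i, j} : Finset (Fin N)) ∈ H)) := by
  classical
  intro n
  induction n with
  | zero =>
    intro a b hcard hab habH C D hCD
    exact INT_empty hab habH C D hCD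
      (Finset.card_eq_zero.1 (le_antisymm hcard (Nat.zero_le _)))
  | succ n ih =>
    intro a b hcard hab habH C D hCD
    by_cases hIoo : Finset.Ioo a b = ∅
    · exact INT_empty hab habH C D hCD hIoo
    -- W is nonempty
    have hWsub : WS H a b ⊆ Finset.Ioo a b := WS_subset H a b
    have hWne : (WS H a b).Nonempty := by
      obtain ⟨z, hz⟩ := Finset.nonempty_iff_ne_empty.2 hIoo
      by_cases hzW : z ∈ WS H a b
      · exact ⟨z, hzW⟩
      · obtain ⟨c, d, k1, k2, k3, k4, k5, k6, hcW, hdW, _⟩ :=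
          cov_max hNC (cov_of_not_WS hz hzW)
        rcases hcW with hca | hcW
        · rcases hdW with hdb | hdW
          · exact absurd ⟨hca, hdb⟩ k5
          · exact ⟨d, hdW⟩
        · exact ⟨c, hcW⟩
    obtain ⟨W, hWdef⟩ : ∃ W', W' = WS H a b := ⟨_, rfl⟩
    have hWsub : W ⊆ Finset.Ioo a b := by rw [hWdef]; exact WS_subset H a b
    have hWne' : W.Nonempty := by rw [hWdef]; exact hWne
    have hWnotcov : ∀ {w : Fin N}, w ∈ W → ¬ Cov H a b w := by
      intro w hw; rw [hWdef] at hw; exact WS_not_cov hw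
    have hWcov : ∀ {z : Fin N}, z ∈ Finset.Ioo a b → z ∉ W → Cov H a b z := by
      intro z h1 h2; rw [hWdef] at h2; exact cov_of_not_WS h1 h2
    have hcovmax : ∀ {z : Fin N}, Cov H a b z →
        ∃ c d : Fin N, a ≤ c ∧ c < z ∧ z < d ∧ d ≤ b ∧ ¬(c = a ∧ d = b) ∧
          ({c, d} : Finset (Fin N)) ∈ H ∧
          (c = a ∨ c ∈ W) ∧ (d = b ∨ d ∈ W) ∧
          (∀ w ∈ W, ¬(c < w ∧ w < d)) := by
      intro z hz; rw [hWdef]; exact cov_max hNC hz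
    have hr1 : 1 ≤ W.card := Finset.card_pos.2 hWne'
    obtain ⟨g, hgdef⟩ : ∃ g', g' = gfun a b W := ⟨_, rfl⟩
    have hg0 : g 0 = a := by rw [hgdef]; exact gfun_zero
    have hgl : g (W.card + 1) = b := by rw [hgdef]; exact gfun_last
    have hgmem : ∀ k, 1 ≤ k → k ≤ W.card → g k ∈ W := by
      intro k h1 h2; rw [hgdef]; exact gfun_mem h1 h2
    have hgmono : ∀ k m, k < m → m ≤ W.card + 1 → g k < g m := by
      intro k m h1 h2; rw [hgdef]; exact gfun_mono hab hWsub h1 h2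
    have hgmonole : ∀ k m, k ≤ m → m ≤ W.card + 1 → g k ≤ g m := by
      intro k m h1 h2; rw [hgdef]; exact gfun_mono_le hab hWsub h1 h2
    have hgreflect : ∀ k m, k ≤ W.card + 1 → m ≤ W.card + 1 → g k < g m → k < m := by
      intro k m h1 h2 h3; rw [hgdef] at h3; exact gfun_reflect hab hWsub h1 h2 h3
    have hginj : ∀ k m, k ≤ W.card + 1 → m ≤ W.card + 1 → g k = g m → k = m := by
      intro k m h1 h2 h3; rw [hgdef] at h3; exact gfun_inj hab hWsub h1 h2 h3
    have hgsurj : ∀ w ∈ W, ∃ k, 1 ≤ k ∧ k ≤ W.card ∧ g k = w := by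
      intro w hw
      obtain ⟨k, h1, h2, h3⟩ := gfun_surj (a := a) (b := b) hw
      exact ⟨k, h1, h2, by rw [hgdef]; exact h3⟩
    have hga : ∀ k, k ≤ W.card + 1 → a ≤ g k := by
      intro k hk
      rw [← hg0]
      exact hgmonole 0 k (Nat.zero_le k) hk
    have hgb : ∀ k, k ≤ W.card + 1 → g k ≤ b := by
      intro k hk
      rw [← hgl]
      exact hgmonole k (W.card+1) hk (le_refl _)
    -- chain data
    obtain ⟨τ, hτdef⟩ : ∃ τ' : ℕ → ℝ,
        τ' = fun k => if ({g k, g (k+1)} : Finset (Fin N)) ∈ H then 1 else 2 := ⟨_, rfl⟩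
    have hτapp : ∀ k, τ k = if ({g k, g (k+1)} : Finset (Fin N)) ∈ H then 1 else 2 := by
      intro k; rw [hτdef]
    have hτ1 : ∀ i, 1 ≤ τ i := by
      intro i; rw [hτapp]; split <;> norm_num
    obtain ⟨P, Q, hP0, hQ0, hPl, hQl, hmid, hPnn, hQnn, hcons, hstrict⟩ :=
      chain_exists W.card hr1 τ hτ1
    obtain ⟨T, hTdef⟩ : ∃ T' : ℕ → ℕ → ℝ, T' = fun k m => P k * Q m - P m * Q k := ⟨_, rfl⟩
    have hTapp : ∀ k m, T k m = P k * Q m - P m * Q k := by intro k m; rw [hTdef]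
    obtain ⟨CV, hCVdef⟩ : ∃ CV' : ℕ → ℝ × ℝ, CV' = fun k => P k • C + Q k • D := ⟨_, rfl⟩
    have hCVapp : ∀ k, CV k = P k • C + Q k • D := by intro k; rw [hCVdef]
    have hCV0 : CV 0 = C := by rw [hCVapp, hP0, hQ0]; simp
    have hCVl : CV (W.card + 1) = D := by rw [hCVapp, hPl, hQl]; simp
    have hdetCV : ∀ k m, det2 (CV k) (CV m) = T k m := by
      intro k m
      rw [hCVapp, hCVapp, hTapp, det2_combo, det2_self, det2_self, hCD]
      have : det2 D C = -1 := by
        simp only [det2] at hCD ⊢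
        linarith
      rw [this]
      ring
    -- chain det facts
    have hT01 : T 0 (W.card + 1) = 1 := by
      rw [hTapp, hP0, hQ0, hPl, hQl]; ring
    have hTcons : ∀ k, k ≤ W.card → T k (k+1) = τ k := by
      intro k hk; rw [hTapp]; exact hcons k hk
    have hTstrict : ∀ k m, k + 1 < m → m ≤ W.card + 1 → ¬(k = 0 ∧ m = W.card + 1) →
        1 < T k m := by
      intro k m h1 h2 h3; rw [hTapp]; exact hstrict k m h1 h2 h3
    have hTge1 : ∀ k m, k < m → m ≤ W.card + 1 → 1 ≤ T k m := by
      intro k m hkm hm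
      by_cases hm1 : m = k + 1
      · subst hm1
        rw [hTcons k (by omega)]
        exact hτ1 k
      · by_cases h0l : k = 0 ∧ m = W.card + 1
        · rw [h0l.1, h0l.2, hT01]
        · exact (hTstrict k m (by omega) hm h0l).le

    have hTge0 : ∀ k m, k ≤ m → m ≤ W.card + 1 → 0 ≤ T k m := by
      intro k m hkm hm
      rcases eq_or_ne k m with h | h
      · subst h; rw [hTapp]; simp
      · linarith [hTge1 k m (by omega) hm]
    -- an edge between non-consecutive chain members (other than {a,b}) is impossible
    have hnoskip : ∀ k m, k + 1 < m → m ≤ W.card + 1 → ¬(k = 0 ∧ m = W.card + 1) →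
        ({g k, g m} : Finset (Fin N)) ∉ H := by
      intro k m hkm hm hne hedge
      have hw : g (k+1) ∈ W := hgmem (k+1) (by omega) (by omega)
      apply hWnotcov hw
      refine ⟨g k, g m, hga k (by omega), hgmono k (k+1) (by omega) (by omega),
        hgmono (k+1) m (by omega) hm, hgb m hm, ?_, hedge⟩
      rintro ⟨hka, hmb⟩
      apply hne
      constructor
      · exact hginj k 0 (by omega) (by omega) (by rw [hg0]; exact hka)
      · exact hginj m (W.card+1) hm (le_refl _) (by rw [hgl]; exact hmb)
    have hTedge : ∀ k m, k < m → m ≤ W.card + 1 →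
        (T k m = 1 ↔ ({g k, g m} : Finset (Fin N)) ∈ H) := by
      intro k m hkm hm
      by_cases hm1 : m = k + 1
      · subst hm1
        rw [hTcons k (by omega), hτapp]
        split
        · exact ⟨fun _ => by assumption, fun _ => rfl⟩
        · constructor
          · intro h; norm_num at h
          · intro h; exact absurd h (by assumption)
      · by_cases h0l : k = 0 ∧ m = W.card + 1
        · rw [h0l.1, h0l.2, hT01, hg0, hgl]
          exact ⟨fun _ => habH, fun _ => rfl⟩
        · have h2 := hTstrict k m (by omega) hm h0l
          constructor
          · intro h; rw [h] at h2; exact absurd h2 (lt_irrefl 1)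
          · intro h; exact absurd h (hnoskip k m (by omega) hm h0l)
    -- children from the induction hypothesis
    have hchild : ∀ k : ℕ, ∃ Vc : Fin N → ℝ × ℝ, k ≤ W.card →
        ({g k, g (k+1)} : Finset (Fin N)) ∈ H →
        (Vc (g k) = CV k ∧ Vc (g (k+1)) = CV (k+1) ∧
         (∀ z, g k < z → z < g (k+1) → ∃ p q : ℝ, 1 ≤ p ∧ 1 ≤ q ∧
            Vc z = p • CV k + q • CV (k+1)) ∧
         (∀ i j, g k ≤ i → i < j → j ≤ g (k+1) →
            1 ≤ det2 (Vc i) (Vc j) ∧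
            (det2 (Vc i) (Vc j) = 1 ↔ ({i, j} : Finset (Fin N)) ∈ H))) := by
      intro k
      by_cases hk : k ≤ W.card ∧ ({g k, g (k+1)} : Finset (Fin N)) ∈ H
      · obtain ⟨hkr, hedge⟩ := hk
        have hlt : g k < g (k+1) := hgmono k (k+1) (by omega) (by omega)
        have hdet1 : det2 (CV k) (CV (k+1)) = 1 := by
          rw [hdetCV]
          exact (hTedge k (k+1) (by omega) (by omega)).2 hedge
        have hcardlt : (Finset.Ioo (g k) (g (k+1))).card ≤ n := by
          have hsub : Finset.Ioo (g k) (g (k+1)) ⊆ Finset.Ioo a b := by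
            intro x hx
            rw [Finset.mem_Ioo] at hx ⊢
            exact ⟨lt_of_le_of_lt (hga k (by omega)) hx.1,
                   lt_of_lt_of_le hx.2 (hgb (k+1) (by omega))⟩
          have hwit : ∃ w, w ∈ Finset.Ioo a b ∧ w ∉ Finset.Ioo (g k) (g (k+1)) := by
            rcases eq_or_ne k 0 with h0 | h0
            · refine ⟨g 1, hWsub (hgmem 1 le_rfl hr1), ?_⟩
              subst h0
              simp [Finset.mem_Ioo, lt_irrefl]
            · refine ⟨g k, hWsub (hgmem k (by omega) hkr), ?_⟩
              simp [Finset.mem_Ioo, lt_irrefl]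
          obtain ⟨w, hw1, hw2⟩ := hwit
          have hss : Finset.Ioo (g k) (g (k+1)) ⊂ Finset.Ioo a b :=
            ⟨hsub, fun hcon => hw2 (hcon hw1)⟩
          have := Finset.card_lt_card hss
          omega
        obtain ⟨Vc, h1, h2, h3, h4⟩ := ih (g k) (g (k+1)) hcardlt hlt hedge (CV k) (CV (k+1)) hdet1
        exact ⟨Vc, fun _ _ => ⟨h1, h2, h3, h4⟩⟩
      · exact ⟨fun _ => C, fun h1 h2 => absurd ⟨h1, h2⟩ hk⟩
    choose F hF using hchild
    -- consecutive covering interval for covered vertices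
    have hcovk : ∀ z : Fin N, ∃ k : ℕ, z ∈ Finset.Ioo a b → z ∉ W →
        (k ≤ W.card ∧ g k < z ∧ z < g (k+1) ∧ ({g k, g (k+1)} : Finset (Fin N)) ∈ H) := by
      intro z
      by_cases hz : z ∈ Finset.Ioo a b ∧ z ∉ W
      · obtain ⟨hz1, hz2⟩ := hz
        obtain ⟨c, d, k1, k2, k3, k4, k5, k6, hcW, hdW, hnoW⟩ := hcovmax (hWcov hz1 hz2)
        have hc : ∃ kc, kc ≤ W.card + 1 ∧ g kc = c := by
          rcases hcW with h | h
          · exact ⟨0, by omega, by rw [hg0, h]⟩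
          · obtain ⟨kc, e1, e2, e3⟩ := hgsurj c h
            exact ⟨kc, by omega, e3⟩
        have hd : ∃ kd, kd ≤ W.card + 1 ∧ g kd = d := by
          rcases hdW with h | h
          · exact ⟨W.card + 1, le_refl _, by rw [hgl, h]⟩
          · obtain ⟨kd, e1, e2, e3⟩ := hgsurj d h
            exact ⟨kd, by omega, e3⟩
        obtain ⟨kc, hkc, hgkc⟩ := hc
        obtain ⟨kd, hkd, hgkd⟩ := hd
        have hcd : kc < kd := by
          apply hgreflect kc kd hkc hkd
          rw [hgkc, hgkd]
          exact lt_trans k2 k3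
        have hconsec : kd = kc + 1 := by
          by_contra hne
          have hmidW : g (kc+1) ∈ W := hgmem (kc+1) (by omega) (by omega)
          apply hnoW (g (kc+1)) hmidW
          constructor
          · rw [← hgkc]; exact hgmono kc (kc+1) (by omega) (by omega)
          · rw [← hgkd]; exact hgmono (kc+1) kd (by omega) hkd
        refine ⟨kc, fun _ _ => ⟨by omega, ?_, ?_, ?_⟩⟩
        · rw [hgkc]; exact k2
        · rw [← hconsec, hgkd]; exact k3
        · rw [← hconsec, hgkc, hgkd]; exact k6
      · exact ⟨0, fun h1 h2 => absurd ⟨h1, h2⟩ hz⟩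
    choose kz hkz using hcovk
    -- index of level-one vertices
    have hWidx : ∀ w : Fin N, ∃ k : ℕ, w ∈ W → (1 ≤ k ∧ k ≤ W.card ∧ g k = w) := by
      intro w
      by_cases hw : w ∈ W
      · obtain ⟨k, h1, h2, h3⟩ := hgsurj w hw
        exact ⟨k, fun _ => ⟨h1, h2, h3⟩⟩
      · exact ⟨0, fun h => absurd h hw⟩
    choose iw hiw using hWidx
    -- the global function
    obtain ⟨V, hVdef⟩ : ∃ V' : Fin N → ℝ × ℝ, V' = fun z =>
        if z = a then C else if z = b then D else
        if z ∈ W then CV (iw z) else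
        if z ∈ Finset.Ioo a b then F (kz z) z else C := ⟨_, rfl⟩
    have hVa : V a = C := by rw [hVdef]; simp
    have hVb : V b = D := by rw [hVdef]; simp [hab.ne']
    have hVg : ∀ k, k ≤ W.card + 1 → V (g k) = CV k := by
      intro k hk
      rcases eq_or_ne k 0 with h0 | h0
      · subst h0; rw [hg0, hVa, hCV0]
      rcases eq_or_ne k (W.card + 1) with hl' | hl'
      · subst hl'; rw [hgl, hVb, hCVl]
      · have hw : g k ∈ W := hgmem k (by omega) (by omega)
        have hane : g k ≠ a := by
          have : a < g k := by rw [← hg0]; exact hgmono 0 k (by omega) hk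
          exact this.ne'
        have hbne : g k ≠ b := by
          have : g k < b := by rw [← hgl]; exact hgmono k (W.card+1) (by omega) (le_refl _)
          exact this.ne
        obtain ⟨i1, i2, i3⟩ := hiw (g k) hw
        have hiwk : iw (g k) = k := hginj _ _ (by omega) hk i3
        rw [hVdef]
        simp only [if_neg hane, if_neg hbne, if_pos hw]
        rw [hiwk]
    have hVdeepeq : ∀ z, z ∈ Finset.Ioo a b → z ∉ W → V z = F (kz z) z := by
      intro z hzI hzW
      have h' := Finset.mem_Ioo.1 hzI
      rw [hVdef]
      simp only [if_neg h'.1.ne', if_neg h'.2.ne, if_neg hzW, if_pos hzI]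
    have hPge1 : ∀ k, k ≤ W.card → 1 ≤ P k := by
      intro k hk
      rcases eq_or_ne k 0 with h0 | h0
      · rw [h0, hP0]
      · exact (hmid k (by omega) hk).1
    have hQge1 : ∀ k, 1 ≤ k → k ≤ W.card + 1 → 1 ≤ Q k := by
      intro k h1 h2
      rcases eq_or_ne k (W.card + 1) with h0 | h0
      · rw [h0, hQl]
      · exact (hmid k h1 (by omega)).2
    refine ⟨V, hVa, hVb, ?_, ?_⟩
    · -- the coefficient invariant
      intro z h1 h2
      have hzI : z ∈ Finset.Ioo a b := Finset.mem_Ioo.2 ⟨h1, h2⟩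
      by_cases hw : z ∈ W
      · obtain ⟨i1, i2, i3⟩ := hiw z hw
        have : V z = CV (iw z) := by
          conv_lhs => rw [← i3]
          rw [hVg (iw z) (by omega)]
        refine ⟨P (iw z), Q (iw z), (hmid (iw z) i1 i2).1, (hmid (iw z) i1 i2).2, ?_⟩
        rw [this, hCVapp]
      · obtain ⟨c1, c2, c3, c4⟩ := hkz z hzI hw
        obtain ⟨f1, f2, f3, f4⟩ := hF (kz z) c1 c4
        obtain ⟨p, q, hp, hq, hpq⟩ := f3 z c2 c3
        refine ⟨p * P (kz z) + q * P (kz z + 1), p * Q (kz z) + q * Q (kz z + 1), ?_, ?_, ?_⟩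
        · have := hPge1 (kz z) c1
          nlinarith [hPnn (kz z + 1)]
        · have := hQge1 (kz z + 1) (by omega) (by omega)
          nlinarith [hQnn (kz z)]
        · rw [hVdeepeq z hzI hw, hpq, hCVapp, hCVapp]
          simp only [smul_add, smul_smul]
          module
    · -- the determinant conditions
      intro i j hai hij hjb
      have hclass : ∀ x : Fin N, a ≤ x → x ≤ b →
          (∃ k, k ≤ W.card + 1 ∧ g k = x) ∨ (x ∈ Finset.Ioo a b ∧ x ∉ W) := by
        intro x h1 h2
        rcases eq_or_lt_of_le h1 with h | h
        · exact Or.inl ⟨0, by omega, by rw [hg0, ← h]⟩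
        rcases eq_or_lt_of_le h2 with h' | h'
        · exact Or.inl ⟨W.card + 1, le_refl _, by rw [hgl, h']⟩
        by_cases hw : x ∈ W
        · obtain ⟨k, k1, k2, k3⟩ := hgsurj x hw
          exact Or.inl ⟨k, by omega, k3⟩
        · exact Or.inr ⟨Finset.mem_Ioo.2 ⟨h, h'⟩, hw⟩
      rcases hclass i hai (le_trans hij.le hjb) with ⟨k, hk, hgk⟩ | ⟨hiI, hiW⟩
      · rcases hclass j (le_trans hai hij.le) hjb with ⟨m, hm, hgm⟩ | ⟨hjI, hjW⟩
        · -- chain, chain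
          have hkm : k < m := hgreflect k m hk hm (by rw [hgk, hgm]; exact hij)
          rw [← hgk, ← hgm, hVg k hk, hVg m hm, hdetCV]
          refine ⟨hTge1 k m hkm hm, ?_⟩
          rw [hTedge k m hkm hm, hgk, hgm]
        · -- chain, deep
          obtain ⟨c1, c2, c3, c4⟩ := hkz j hjI hjW
          have hklt : k < kz j + 1 := by
            apply hgreflect k (kz j + 1) hk (by omega)
            rw [hgk]
            exact lt_trans hij c3
          obtain ⟨f1, f2, f3, f4⟩ := hF (kz j) c1 c4
          rcases eq_or_ne k (kz j) with he | hne
          · -- inside the child interval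
            have hVi : V i = F (kz j) i := by
              rw [← hgk, he, hVg (kz j) (by omega), f1]
            have hVj : V j = F (kz j) j := by rw [hVdeepeq j hjI hjW]
            rw [hVi, hVj]
            apply f4 i j ?_ hij c3.le
            rw [← hgk, he]
          · have hkl : k < kz j := by omega
            obtain ⟨p, q, hp, hq, hpq⟩ := f3 j c2 c3
            have hVj : V j = p • CV (kz j) + q • CV (kz j + 1) := by
              rw [hVdeepeq j hjI hjW, hpq]
            have hVi : V i = CV k := by rw [← hgk, hVg k hk]
            rw [hVi, hVj, det2_rlin, hdetCV, hdetCV]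
            have t1 : 1 ≤ T k (kz j) := hTge1 k (kz j) hkl (by omega)
            have t2 : 1 ≤ T k (kz j + 1) := hTge1 k (kz j + 1) (by omega) (by omega)
            have hgt : 1 < p * T k (kz j) + q * T k (kz j + 1) := by nlinarith
            refine ⟨hgt.le, ?_⟩
            constructor
            · intro h; exfalso; rw [h] at hgt; exact lt_irrefl 1 hgt
            · intro hedge'
              exfalso
              exact hNC i j (g (kz j)) (g (kz j + 1)) hij
                (hgmono (kz j) (kz j + 1) (by omega) (by omega)) hedge' c4
                (by rw [← hgk]; exact hgmono k (kz j) hkl (by omega)) c2 c3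
      · obtain ⟨d1, d2, d3, d4⟩ := hkz i hiI hiW
        obtain ⟨fi1, fi2, fi3, fi4⟩ := hF (kz i) d1 d4
        rcases hclass j (le_trans hai hij.le) hjb with ⟨m, hm, hgm⟩ | ⟨hjI, hjW⟩
        · -- deep, chain
          have hlm : kz i < m := by
            apply hgreflect (kz i) m (by omega) hm
            calc g (kz i) < i := d2
              _ < j := hij
              _ = g m := hgm.symm
          rcases eq_or_ne m (kz i + 1) with he | hne
          · -- inside the child interval
            have hVi : V i = F (kz i) i := by rw [hVdeepeq i hiI hiW]
            have hVj : V j = F (kz i) j := by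
              conv_lhs => rw [← hgm]
              conv_rhs => rw [← hgm]
              rw [hVg m hm, he, fi2]
            rw [hVi, hVj]
            apply fi4 i j d2.le hij
            rw [← hgm, he]
          · have hlm2 : kz i + 1 < m := by omega
            obtain ⟨p, q, hp, hq, hpq⟩ := fi3 i d2 d3
            have hVj : V j = CV m := by
              conv_lhs => rw [← hgm]
              rw [hVg m hm]
            rw [hVdeepeq i hiI hiW, hpq, hVj, det2_llin, hdetCV, hdetCV]
            have t1 : 1 ≤ T (kz i) m := hTge1 (kz i) m hlm hm
            have t2 : 1 ≤ T (kz i + 1) m := hTge1 (kz i + 1) m hlm2 hm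
            have hgt : 1 < p * T (kz i) m + q * T (kz i + 1) m := by nlinarith
            refine ⟨hgt.le, ?_⟩
            constructor
            · intro h; exfalso; rw [h] at hgt; exact lt_irrefl 1 hgt
            · intro hedge'
              exfalso
              exact hNC (g (kz i)) (g (kz i + 1)) i j
                (hgmono (kz i) (kz i + 1) (by omega) (by omega)) hij d4 hedge' d2 d3
                (by rw [← hgm]; exact hgmono (kz i + 1) m hlm2 hm)
        · -- deep, deep
          obtain ⟨e1, e2, e3, e4⟩ := hkz j hjI hjW
          have hll : kz i ≤ kz j := by
            by_contra hc
            push_neg at hc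
            have : j < i :=
              lt_trans (lt_of_lt_of_le e3 (hgmonole (kz j + 1) (kz i) (by omega) (by omega))) d2
            exact absurd hij (not_lt.2 this.le)
          rcases eq_or_ne (kz i) (kz j) with he | hne
          · -- same child interval
            have hVi : V i = F (kz i) i := by rw [hVdeepeq i hiI hiW]
            have hVj : V j = F (kz i) j := by rw [hVdeepeq j hjI hjW, ← he]
            rw [hVi, hVj]
            apply fi4 i j d2.le hij
            rw [he]
            exact e3.le
          · have hlt : kz i < kz j := by omega
            obtain ⟨fj1, fj2, fj3, fj4⟩ := hF (kz j) e1 e4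
            obtain ⟨p, q, hp, hq, hpq⟩ := fi3 i d2 d3
            obtain ⟨p', q', hp', hq', hpq'⟩ := fj3 j e2 e3
            rw [hVdeepeq i hiI hiW, hVdeepeq j hjI hjW, hpq, hpq', det2_combo,
                hdetCV, hdetCV, hdetCV, hdetCV]
            have t1 : 1 ≤ T (kz i) (kz j) := hTge1 _ _ hlt (by omega)
            have t2 : 1 ≤ T (kz i) (kz j + 1) := hTge1 _ _ (by omega) (by omega)
            have t3 : 0 ≤ T (kz i + 1) (kz j) := hTge0 _ _ (by omega) (by omega)
            have t4 : 1 ≤ T (kz i + 1) (kz j + 1) := hTge1 _ _ (by omega) (by omega)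
            have hgt : 1 < p * p' * T (kz i) (kz j) + p * q' * T (kz i) (kz j + 1) +
                q * p' * T (kz i + 1) (kz j) + q * q' * T (kz i + 1) (kz j + 1) := by
              have u1 : 1 ≤ p * p' * T (kz i) (kz j) :=
                one_le_mul_of_one_le_of_one_le (one_le_mul_of_one_le_of_one_le hp hp') t1
              have u2 : 1 ≤ p * q' * T (kz i) (kz j + 1) :=
                one_le_mul_of_one_le_of_one_le (one_le_mul_of_one_le_of_one_le hp hq') t2
              have u4 : 1 ≤ q * q' * T (kz i + 1) (kz j + 1) :=
                one_le_mul_of_one_le_of_one_le (one_le_mul_of_one_le_of_one_le hq hq') t4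
              have u3 : 0 ≤ q * p' * T (kz i + 1) (kz j) :=
                mul_nonneg (mul_nonneg (by linarith) (by linarith)) t3
              linarith
            refine ⟨hgt.le, ?_⟩
            constructor
            · intro h; exfalso; rw [h] at hgt; exact lt_irrefl 1 hgt
            · intro hedge'
              exfalso
              exact hNC (g (kz i)) (g (kz i + 1)) i j
                (hgmono (kz i) (kz i + 1) (by omega) (by omega)) hij d4 hedge' d2 d3
                (lt_of_le_of_lt (hgmonole (kz i + 1) (kz j) hlt (by omega)) e2)

/-! ## Final assembly -/

lemma pair_eq_sorted {α : Type*} [LinearOrder α] [DecidableEq α] {a b c d : α}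
    (hab : a < b) (hcd : c < d) (h : ({a, b} : Finset α) = {c, d}) : a = c ∧ b = d := by
  have ha : a ∈ ({c, d} : Finset α) := h ▸ (by simp)
  have hb : b ∈ ({c, d} : Finset α) := h ▸ (by simp)
  simp only [Finset.mem_insert, Finset.mem_singleton] at ha hb
  rcases ha with h1 | h1 <;> rcases hb with h2 | h2
  · exact absurd (h1.trans h2.symm) hab.ne
  · exact ⟨h1, h2⟩
  · exfalso
    have : d < c := by rw [← h1, ← h2]; exact hab
    exact absurd this (not_lt.2 hcd.le)
  · exact absurd (h1.trans h2.symm) hab.ne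
def shift {n : ℕ} (i : Fin n) : Fin (n + 2) := ⟨i.1 + 1, by omega⟩

lemma shift_lt {n : ℕ} {i j : Fin n} (h : i < j) : shift i < shift j := by
  simp only [shift, Fin.mk_lt_mk]
  exact Nat.add_lt_add_right h 1

lemma shift_inj {n : ℕ} : Function.Injective (shift (n := n)) := by
  intro i j h
  simp only [shift, Fin.mk.injEq] at h
  exact Fin.ext (by omega)

lemma shift_pos {n : ℕ} (i : Fin n) : (0 : Fin (n+2)) < shift i := by
  simp [shift, Fin.lt_def]

lemma shift_lt_last {n : ℕ} (i : Fin n) : shift i < Fin.last (n+1) := by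
  simp only [shift, Fin.lt_def, Fin.val_last]
  omega

lemma shift_pair_image {n : ℕ} (i j : Fin n) :
    ({i, j} : Finset (Fin n)).image shift = {shift i, shift j} := by
  simp

/-- the extended graph on `Fin (n+2)` -/
noncomputable def extG {n : ℕ} (G : Finset (Finset (Fin n))) : Finset (Finset (Fin (n+2))) :=
  G.image (fun e => e.image shift) ∪ {({0, Fin.last (n+1)} : Finset (Fin (n+2)))}

lemma extG_pair {n : ℕ} (G : Finset (Finset (Fin n))) (i j : Fin n) :
    (({shift i, shift j} : Finset (Fin (n+2))) ∈ extG G) ↔ ({i, j} : Finset (Fin n)) ∈ G := by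
  constructor
  · intro h
    rcases Finset.mem_union.1 h with h | h
    · obtain ⟨e, he, hee⟩ := Finset.mem_image.1 h
      rw [← shift_pair_image] at hee
      have := Finset.image_injective shift_inj hee
      rwa [this] at he
    · exfalso
      rw [Finset.mem_singleton] at h
      have h0 : (0 : Fin (n+2)) ∈ ({shift i, shift j} : Finset (Fin (n+2))) := by
        rw [h]; simp
      simp only [Finset.mem_insert, Finset.mem_singleton] at h0
      rcases h0 with h0 | h0 <;>
        exact absurd h0 (shift_pos _).ne
  · intro h
    apply Finset.mem_union_left
    apply Finset.mem_image.2
    exact ⟨{i, j}, h, shift_pair_image i j⟩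

lemma extG_NC {n : ℕ} (G : Finset (Finset (Fin n))) (hG2 : ∀ e ∈ G, e.card = 2)
    (hG : ∀ e ∈ G, ∀ f ∈ G, (e ∩ f).Nonempty ∨ ¬ Crossing e f) :
    NC (extG G) := by
  -- sorted description of edges of extG
  have hedge : ∀ a b : Fin (n+2), a < b → ({a, b} : Finset (Fin (n+2))) ∈ extG G →
      (a = 0 ∧ b = Fin.last (n+1)) ∨
      (∃ i j : Fin n, i < j ∧ a = shift i ∧ b = shift j ∧ ({i, j} : Finset (Fin n)) ∈ G) := by
    intro a b hab h
    rcases Finset.mem_union.1 h with h | h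
    · right
      obtain ⟨e, he, hee⟩ := Finset.mem_image.1 h
      obtain ⟨x, y, hxy, hxye⟩ := Finset.card_eq_two.1 (hG2 e he)
      subst hxye
      rcases lt_or_gt_of_ne hxy with hlt | hlt
      · rw [shift_pair_image] at hee
        obtain ⟨h1, h2⟩ := pair_eq_sorted (shift_lt hlt) hab hee
        exact ⟨x, y, hlt, h1.symm, h2.symm, he⟩
      · rw [Finset.pair_comm x y] at he hee
        rw [shift_pair_image] at hee
        obtain ⟨h1, h2⟩ := pair_eq_sorted (shift_lt hlt) hab hee
        exact ⟨y, x, hlt, h1.symm, h2.symm, he⟩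
    · left
      rw [Finset.mem_singleton] at h
      have h0 : (0 : Fin (n+2)) < Fin.last (n+1) := by
        simp [Fin.lt_def]
      exact pair_eq_sorted hab h0 h
  intro a b c d hab hcd hA hB h1 h2 h3
  rcases hedge a b hab hA with ⟨ha0, hbl⟩ | ⟨i, j, hij, hai, hbj, hijG⟩
  · subst hbl
    exact absurd h3 (not_lt.2 (Fin.le_last d))
  rcases hedge c d hcd hB with ⟨hc0, hdl⟩ | ⟨k, l, hkl, hck, hdl, hklG⟩
  · subst hc0
    exact absurd h1 (not_lt.2 (Fin.zero_le a))
  -- both shifted: derive crossing in G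
  subst hai; subst hbj; subst hck; subst hdl
  have hik : i < k := by
    rw [Fin.lt_def]
    simp only [shift, Fin.lt_def] at h1
    omega
  have hkj : k < j := by
    rw [Fin.lt_def]
    simp only [shift, Fin.lt_def] at h2
    omega
  have hjl : j < l := by
    rw [Fin.lt_def]
    simp only [shift, Fin.lt_def] at h3
    omega
  rcases hG _ hijG _ hklG with hne | hncr
  · obtain ⟨x, hx⟩ := hne
    rw [Finset.mem_inter] at hx
    obtain ⟨hx1, hx2⟩ := hx
    simp only [Finset.mem_insert, Finset.mem_singleton] at hx1 hx2
    rcases hx1 with h | h <;> rcases hx2 with h' | h'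
    · exact absurd (h.symm.trans h') hik.ne
    · exact absurd (h.symm.trans h') (lt_trans (lt_trans hik hkj) hjl).ne
    · exact absurd (h.symm.trans h') hkj.ne'
    · exact absurd (h.symm.trans h') hjl.ne
  · exact hncr ⟨i, j, k, l, hij, hkl, rfl, rfl, Or.inl ⟨hik, hkj, hjl⟩⟩

lemma backward_dir {n : ℕ} (G : Finset (Finset (Fin n))) (hGne : G.Nonempty)
    (hG2 : ∀ e ∈ G, e.card = 2)
    (hG : ∀ e ∈ G, ∀ f ∈ G, (e ∩ f).Nonempty ∨ ¬ Crossing e f) :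
    IsArrSmallest 2 n G := by
  classical
  have hNC : NC (extG G) := extG_NC G hG2 hG
  have h0l : (0 : Fin (n+2)) < Fin.last (n+1) := by simp [Fin.lt_def]
  have hmem : ({0, Fin.last (n+1)} : Finset (Fin (n+2))) ∈ extG G :=
    Finset.mem_union_right _ (Finset.mem_singleton_self _)
  have hCD : det2 ((1 : ℝ), (0 : ℝ)) ((0 : ℝ), (1 : ℝ)) = 1 := by norm_num [det2]
  obtain ⟨V, hVa, hVb, hinv, hpairs⟩ := INT hNC
    (Finset.Ioo (0 : Fin (n+2)) (Fin.last (n+1))).card 0 (Fin.last (n+1))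
    (le_refl _) h0l hmem ((1 : ℝ), (0 : ℝ)) ((0 : ℝ), (1 : ℝ)) hCD
  set v : Fin n → ℝ × ℝ := fun i => V (shift i) with hvdef
  have hdets : ∀ i j : Fin n, i < j →
      1 ≤ det2 (v i) (v j) ∧ (det2 (v i) (v j) = 1 ↔ ({i, j} : Finset (Fin n)) ∈ G) := by
    intro i j hij
    have h := hpairs (shift i) (shift j) (Fin.zero_le _) (shift_lt hij) (Fin.le_last _)
    exact ⟨h.1, by rw [h.2, extG_pair]⟩
  set A : Matrix (Fin 2) (Fin n) ℝ :=
    Matrix.of (fun r j => if r = 0 then (v j).1 else (v j).2) with hAdef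
  have hcol : ∀ j, col A j = v j := by
    intro j
    have h1 : A 0 j = (v j).1 := by simp [hAdef]
    have h2 : A 1 j = (v j).2 := by
      simp only [hAdef, Matrix.of_apply]
      norm_num
    rw [col, h1, h2]
  have hminor : ∀ i j : Fin n, i < j → minorOn 2 n A {i, j} = det2 (v i) (v j) := by
    intro i j hij
    rw [minor_pair A hij, hcol, hcol]
  have hpair2 : ∀ I : Finset (Fin n), I.card = 2 → ∃ i j : Fin n, i < j ∧ I = {i, j} := by
    intro I hI
    obtain ⟨x, y, hxy, hI2⟩ := Finset.card_eq_two.1 hI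
    rcases lt_or_gt_of_ne hxy with h | h
    · exact ⟨x, y, h, hI2⟩
    · exact ⟨y, x, h, by rw [hI2, Finset.pair_comm]⟩
  have hminor1 : ∀ I ∈ G, minorOn 2 n A I = 1 := by
    intro I hI
    obtain ⟨i, j, hij, rfl⟩ := hpair2 I (hG2 I hI)
    rw [hminor i j hij]
    exact (hdets i j hij).2.2 hI
  refine ⟨hGne, hG2, A, ?_, ?_, ?_⟩
  · intro I hI
    obtain ⟨i, j, hij, rfl⟩ := hpair2 I hI
    rw [hminor i j hij]
    linarith [(hdets i j hij).1]
  · intro I hI J hJ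
    rw [hminor1 I hI, hminor1 J hJ]
  · intro K hK2 hKG I hI
    obtain ⟨i, j, hij, rfl⟩ := hpair2 K hK2
    rw [hminor1 I hI, hminor i j hij]
    rcases eq_or_lt_of_le (hdets i j hij).1 with h | h
    · exact absurd ((hdets i j hij).2.1 h.symm) hKG
    · exact h

theorem smallest_arrangements_Gr2n (n : ℕ) (hn : 3 ≤ n)
    (G : Finset (Finset (Fin n))) (hGne : G.Nonempty) (hG2 : ∀ e ∈ G, e.card = 2) :
    IsArrSmallest 2 n G ↔
      ∀ e ∈ G, ∀ f ∈ G, (e ∩ f).Nonempty ∨ ¬ Crossing e f :=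
  ⟨fun h => forward_dir G h, fun h => backward_dir G hGne hG2 h⟩

end Stmt0
end

section
/- Let 0 < k < n, let S be a maximal sorted collection of k-element subsets of {1,…,n}, and let J be a k-element subset of {1,…,n}. Then J ∈ S if and only if no hyperplane H_{i,j,r} = {x ∈ ℝⁿ : x_i + x_{i+1} + ⋯ + x_j = r}, for 1 ≤ i ≤ j ≤ n and r ∈ ℤ, separates the polytope P_S from the point e_J, i.e., if and only if for all such (i,j,r) it is not the case that P_S lies in one closed halfspace determined by H_{i,j,r} while e_J lies in the complementary open halfspace. -/
namespace Stmt12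

/-- `S` and `T` interlace: `s₁ < t₁ < s₂ < t₂ < ⋯ < s_r < t_r`. -/
def Interlaced {α : Type*} [LinearOrder α] (S T : Finset α) : Prop :=
  ∃ (r : ℕ) (hS : S.card = r) (hT : T.card = r),
    (∀ i : Fin r, S.orderEmbOfFin hS i < T.orderEmbOfFin hT i) ∧
    (∀ i j : Fin r, (i : ℕ) + 1 = (j : ℕ) → T.orderEmbOfFin hT i < S.orderEmbOfFin hS j)

/-- Two sets `I`, `J` are sorted if `I∖J` and `J∖I` interlace. -/
def SortedPair {α : Type*} [LinearOrder α] (I J : Finset α) : Prop :=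
  Interlaced (I \ J) (J \ I) ∨ Interlaced (J \ I) (I \ J)

/-- A sorted collection of `k`-element subsets of `{1,…,n}`. -/
def SortedColl (k n : ℕ) (S : Finset (Finset (Fin n))) : Prop :=
  (∀ I ∈ S, I.card = k) ∧ ∀ I ∈ S, ∀ J ∈ S, SortedPair I J

/-- A maximal (by containment) sorted collection. -/
def MaxSortedColl (k n : ℕ) (S : Finset (Finset (Fin n))) : Prop :=
  SortedColl k n S ∧ ∀ T : Finset (Finset (Fin n)), SortedColl k n T → S ⊆ T → S = T

/-- The 0-1 indicator vector `e_I ∈ ℝⁿ` of a subset `I` of `{1,…,n}`. -/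
def indic (n : ℕ) (I : Finset (Fin n)) : Fin n → ℝ :=
  fun i => if i ∈ I then 1 else 0

/-- The polytope `P_S`: the convex hull of the indicator vectors of members of `S`. -/
def polytope (n : ℕ) (S : Finset (Finset (Fin n))) : Set (Fin n → ℝ) :=
  convexHull ℝ (indic n '' (↑S : Set (Finset (Fin n))))

/-- The hyperplane `H_{i,j,r} = {x : x_i + x_{i+1} + ⋯ + x_j = r}` separates `P_S`
from the point `e_J`: `P_S` lies in one closed halfspace while `e_J` lies strictly in
the complementary open halfspace. -/
def Separates (n : ℕ) (S : Finset (Finset (Fin n))) (J : Finset (Fin n))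
    (i j : Fin n) (r : ℤ) : Prop :=
  ((∀ x ∈ polytope n S, ∑ t ∈ Finset.Icc i j, x t ≤ (r : ℝ)) ∧
      (r : ℝ) < ∑ t ∈ Finset.Icc i j, indic n J t) ∨
  ((∀ x ∈ polytope n S, (r : ℝ) ≤ ∑ t ∈ Finset.Icc i j, x t) ∧
      ∑ t ∈ Finset.Icc i j, indic n J t < (r : ℝ))


open Finset

variable {n : ℕ}

/-- prefix count: number of elements of `A` that are `≤ x`. -/
def pcLe (A : Finset (Fin n)) (x : Fin n) : ℕ := (A.filter (fun t => t ≤ x)).card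

/-- strict prefix count. -/
def pcLt (A : Finset (Fin n)) (x : Fin n) : ℕ := (A.filter (fun t => t < x)).card

/-- interval count. -/
def M (A : Finset (Fin n)) (i j : Fin n) : ℕ := ((Finset.Icc i j).filter (fun t => t ∈ A)).card

lemma filter_eq_image {A : Finset (Fin n)} {r : ℕ} (hA : A.card = r)
    (p : Fin n → Prop) [DecidablePred p] :
    A.filter p = (Finset.univ.filter (fun i : Fin r => p (A.orderEmbOfFin hA i))).image
      (A.orderEmbOfFin hA) := by
  ext a
  simp only [mem_filter, mem_image, mem_univ, true_and]
  constructor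
  · rintro ⟨haA, hpa⟩
    have : a ∈ Set.range (A.orderEmbOfFin hA) := by
      rw [Finset.range_orderEmbOfFin]; exact haA
    obtain ⟨j, rfl⟩ := this
    exact ⟨j, hpa, rfl⟩
  · rintro ⟨j, hpj, rfl⟩
    exact ⟨Finset.orderEmbOfFin_mem _ _ _, hpj⟩

lemma card_filter_eq {A : Finset (Fin n)} {r : ℕ} (hA : A.card = r)
    (p : Fin n → Prop) [DecidablePred p] :
    (A.filter p).card =
      (Finset.univ.filter (fun i : Fin r => p (A.orderEmbOfFin hA i))).card := by
  rw [filter_eq_image hA p, Finset.card_image_of_injective _ (A.orderEmbOfFin hA).injective]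

lemma le_pcLe {A : Finset (Fin n)} {r : ℕ} (hA : A.card = r) (i : Fin r) {x : Fin n}
    (hx : A.orderEmbOfFin hA i ≤ x) : (i : ℕ) + 1 ≤ pcLe A x := by
  rw [pcLe, card_filter_eq hA]
  have hsub : Finset.Iic i ⊆ Finset.univ.filter (fun j : Fin r => A.orderEmbOfFin hA j ≤ x) := by
    intro j hj
    rw [Finset.mem_Iic] at hj
    simp only [mem_filter, mem_univ, true_and]
    exact le_trans ((A.orderEmbOfFin hA).monotone hj) hx
  calc (i : ℕ) + 1 = (Finset.Iic i).card := (Fin.card_Iic i).symm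
    _ ≤ _ := Finset.card_le_card hsub

lemma pcLe_le {A : Finset (Fin n)} {r : ℕ} (hA : A.card = r) (i : Fin r) {x : Fin n}
    (hx : x < A.orderEmbOfFin hA i) : pcLe A x ≤ (i : ℕ) := by
  rw [pcLe, card_filter_eq hA]
  have hsub : Finset.univ.filter (fun j : Fin r => A.orderEmbOfFin hA j ≤ x) ⊆ Finset.Iio i := by
    intro j hj
    simp only [mem_filter, mem_univ, true_and] at hj
    rw [Finset.mem_Iio]
    exact (A.orderEmbOfFin hA).lt_iff_lt.1 (lt_of_le_of_lt hj hx)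
  calc _ ≤ (Finset.Iio i).card := Finset.card_le_card hsub
    _ = (i : ℕ) := Fin.card_Iio i

/-- Key lemma 1: prefix-count condition implies interlacing. -/
lemma interlaced_of_pc {A B : Finset (Fin n)} (hd : Disjoint A B) {r : ℕ}
    (hA : A.card = r) (hB : B.card = r)
    (h1 : ∀ x, pcLe B x ≤ pcLe A x) (h2 : ∀ x, pcLe A x ≤ pcLe B x + 1) :
    Interlaced A B := by
  refine ⟨r, hA, hB, ?_, ?_⟩
  · intro i
    by_contra hcon
    push_neg at hcon
    have hne : B.orderEmbOfFin hB i ≠ A.orderEmbOfFin hA i := by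
      intro he
      have hb : B.orderEmbOfFin hB i ∈ B := Finset.orderEmbOfFin_mem _ _ _
      have ha : B.orderEmbOfFin hB i ∈ A := by
        rw [he]; exact Finset.orderEmbOfFin_mem _ _ _
      exact Finset.disjoint_left.1 hd ha hb
    have hlt : B.orderEmbOfFin hB i < A.orderEmbOfFin hA i := lt_of_le_of_ne hcon hne
    have h3 := le_pcLe hB i (le_refl (B.orderEmbOfFin hB i))
    have h4 := pcLe_le hA i hlt
    have := h1 (B.orderEmbOfFin hB i)
    omega
  · intro i j hij
    by_contra hcon
    push_neg at hcon
    have hne : A.orderEmbOfFin hA j ≠ B.orderEmbOfFin hB i := by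
      intro he
      have ha : A.orderEmbOfFin hA j ∈ A := Finset.orderEmbOfFin_mem _ _ _
      have hb : A.orderEmbOfFin hA j ∈ B := by
        rw [he]; exact Finset.orderEmbOfFin_mem _ _ _
      exact Finset.disjoint_left.1 hd ha hb
    have hlt : A.orderEmbOfFin hA j < B.orderEmbOfFin hB i := lt_of_le_of_ne hcon hne
    have h3 := le_pcLe hA j (le_refl (A.orderEmbOfFin hA j))
    have h4 := pcLe_le hB i hlt
    have := h2 (A.orderEmbOfFin hA j)
    omega

/-- Key lemma 2: interlacing implies counts under any downward-closed predicate
differ by at most one. -/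
lemma interlaced_pc {A B : Finset (Fin n)} {r : ℕ} (hA : A.card = r) (hB : B.card = r)
    (h1 : ∀ i : Fin r, A.orderEmbOfFin hA i < B.orderEmbOfFin hB i)
    (h2 : ∀ i j : Fin r, (i : ℕ) + 1 = (j : ℕ) → B.orderEmbOfFin hB i < A.orderEmbOfFin hA j)
    (p : Fin n → Prop) [DecidablePred p] (hp : ∀ ⦃y z : Fin n⦄, y ≤ z → p z → p y) :
    (B.filter p).card ≤ (A.filter p).card ∧ (A.filter p).card ≤ (B.filter p).card + 1 := by
  rw [card_filter_eq hA, card_filter_eq hB]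
  set SA := Finset.univ.filter (fun i : Fin r => p (A.orderEmbOfFin hA i)) with hSA
  set SB := Finset.univ.filter (fun i : Fin r => p (B.orderEmbOfFin hB i)) with hSB
  have hsub : SB ⊆ SA := by
    intro i hi
    simp only [hSA, hSB, mem_filter, mem_univ, true_and] at hi ⊢
    exact hp (le_of_lt (h1 i)) hi
  refine ⟨Finset.card_le_card hsub, ?_⟩
  rcases Nat.eq_zero_or_pos r with hr | hr
  · subst hr
    have h0 : SA.card ≤ 0 := le_trans (Finset.card_le_univ SA) (by simp)
    omega
  · set z : Fin r := ⟨0, hr⟩ with hz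
    set f : Fin r → Fin r := fun i => ⟨i.val - 1, lt_of_le_of_lt (Nat.sub_le _ _) i.isLt⟩ with hf
    have hmaps : ∀ i ∈ SA.erase z, f i ∈ SB := by
      intro i hi
      rw [Finset.mem_erase] at hi
      obtain ⟨hiz, hiSA⟩ := hi
      have hival : 1 ≤ i.val := by
        rcases Nat.eq_zero_or_pos i.val with h0 | h0
        · exact absurd (Fin.ext h0) hiz
        · exact h0
      have hstep : ((f i : Fin r) : ℕ) + 1 = (i : ℕ) := by
        simp only [hf]
        omega
      have hlt := h2 (f i) i hstep
      simp only [hSA, mem_filter, mem_univ, true_and] at hiSA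
      simp only [hSB, mem_filter, mem_univ, true_and]
      exact hp (le_of_lt hlt) hiSA
    have hinj : Set.InjOn f (SA.erase z) := by
      intro i hi j hj hij
      rw [Finset.mem_coe, Finset.mem_erase] at hi hj
      have hi1 : 1 ≤ i.val := by
        rcases Nat.eq_zero_or_pos i.val with h0 | h0
        · exact absurd (Fin.ext h0) hi.1
        · exact h0
      have hj1 : 1 ≤ j.val := by
        rcases Nat.eq_zero_or_pos j.val with h0 | h0
        · exact absurd (Fin.ext h0) hj.1
        · exact h0
      have : i.val - 1 = j.val - 1 := congrArg Fin.val hij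
      exact Fin.ext (by omega)
    have hcard := Finset.card_le_card_of_injOn f hmaps hinj
    by_cases hzSA : z ∈ SA
    · have := Finset.card_erase_of_mem hzSA
      omega
    · rw [Finset.erase_eq_of_notMem hzSA] at hcard
      omega

lemma interlaced_pcLe {A B : Finset (Fin n)} {r : ℕ} (hA : A.card = r) (hB : B.card = r)
    (h1 : ∀ i : Fin r, A.orderEmbOfFin hA i < B.orderEmbOfFin hB i)
    (h2 : ∀ i j : Fin r, (i : ℕ) + 1 = (j : ℕ) → B.orderEmbOfFin hB i < A.orderEmbOfFin hA j)
    (x : Fin n) : pcLe B x ≤ pcLe A x ∧ pcLe A x ≤ pcLe B x + 1 := by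
  have := interlaced_pc hA hB h1 h2 (fun t => t ≤ x) (fun y z hyz hz => le_trans hyz hz)
  simpa only [pcLe, Finset.filter_congr_decidable] using this

lemma interlaced_pcLt {A B : Finset (Fin n)} {r : ℕ} (hA : A.card = r) (hB : B.card = r)
    (h1 : ∀ i : Fin r, A.orderEmbOfFin hA i < B.orderEmbOfFin hB i)
    (h2 : ∀ i j : Fin r, (i : ℕ) + 1 = (j : ℕ) → B.orderEmbOfFin hB i < A.orderEmbOfFin hA j)
    (x : Fin n) : pcLt B x ≤ pcLt A x ∧ pcLt A x ≤ pcLt B x + 1 := by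
  have := interlaced_pc hA hB h1 h2 (fun t => t < x) (fun y z hyz hz => lt_of_le_of_lt hyz hz)
  simpa only [pcLt, Finset.filter_congr_decidable] using this

lemma M_add_pcLt {A : Finset (Fin n)} {i j : Fin n} (hij : i ≤ j) :
    M A i j + pcLt A i = pcLe A j := by
  classical
  have key := Finset.card_filter_add_card_filter_not
    (s := A.filter (fun t => t ≤ j)) (p := fun t => i ≤ t)
  rw [Finset.filter_filter, Finset.filter_filter] at key
  have e1 : A.filter (fun t => t ≤ j ∧ i ≤ t) = (Finset.Icc i j).filter (fun t => t ∈ A) := by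
    ext t
    simp only [Finset.mem_filter, Finset.mem_Icc]
    tauto
  have e2 : A.filter (fun t => t ≤ j ∧ ¬ i ≤ t) = A.filter (fun t => t < i) := by
    ext t
    simp only [Finset.mem_filter, not_le]
    exact ⟨fun ht => ⟨ht.1, ht.2.2⟩, fun ht => ⟨ht.1, le_trans (le_of_lt ht.2) hij, ht.2⟩⟩
  rw [e1, e2] at key
  rw [M, pcLt, pcLe, ← key]

lemma M_sdiff_sub (I J : Finset (Fin n)) (i j : Fin n) :
    (M I i j : ℤ) - M J i j = (M (I \ J) i j : ℤ) - M (J \ I) i j := by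
  classical
  have kI := Finset.card_filter_add_card_filter_not
    (s := (Finset.Icc i j).filter (fun t => t ∈ I)) (p := fun t => t ∈ J)
  have kJ := Finset.card_filter_add_card_filter_not
    (s := (Finset.Icc i j).filter (fun t => t ∈ J)) (p := fun t => t ∈ I)
  simp only [Finset.filter_filter] at kI kJ
  have e1 : (Finset.Icc i j).filter (fun t => t ∈ I ∧ ¬ t ∈ J)
      = (Finset.Icc i j).filter (fun t => t ∈ I \ J) := by
    ext t; simp only [Finset.mem_filter, Finset.mem_sdiff]
  have e2 : (Finset.Icc i j).filter (fun t => t ∈ J ∧ ¬ t ∈ I)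
      = (Finset.Icc i j).filter (fun t => t ∈ J \ I) := by
    ext t; simp only [Finset.mem_filter, Finset.mem_sdiff]
  have e3 : (Finset.Icc i j).filter (fun t => t ∈ I ∧ t ∈ J)
      = (Finset.Icc i j).filter (fun t => t ∈ J ∧ t ∈ I) := by
    ext t; simp only [Finset.mem_filter]; tauto
  rw [e1, e3] at kI
  rw [e2] at kJ
  unfold M
  omega

lemma interlaced_congr {A A' B B' : Finset (Fin n)} (hA : A = A') (hB : B = B')
    (h : Interlaced A B) : Interlaced A' B' := hA ▸ hB ▸ h

lemma M_bound_of_sortedPair {I J : Finset (Fin n)} (h : SortedPair I J)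
    {i j : Fin n} (hij : i ≤ j) :
    (M I i j : ℤ) - M J i j ≤ 1 ∧ (M J i j : ℤ) - M I i j ≤ 1 := by
  have hs := M_sdiff_sub I J i j
  have hs' := M_sdiff_sub J I i j
  rcases h with h | h
  · have h' : Interlaced (I \ J) (J \ I) :=
      interlaced_congr (by ext t; simp [Finset.mem_sdiff])
        (by ext t; simp [Finset.mem_sdiff]) h
    obtain ⟨r, hA, hB, h1, h2⟩ := h'
    have hle := interlaced_pcLe hA hB h1 h2 j
    have hlt := interlaced_pcLt hA hB h1 h2 i
    have mA := M_add_pcLt (A := I \ J) hij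
    have mB := M_add_pcLt (A := J \ I) hij
    simp only [pcLe, pcLt] at hle hlt mA mB
    omega
  · have h' : Interlaced (J \ I) (I \ J) :=
      interlaced_congr (by ext t; simp [Finset.mem_sdiff])
        (by ext t; simp [Finset.mem_sdiff]) h
    obtain ⟨r, hA, hB, h1, h2⟩ := h'
    have hle := interlaced_pcLe hA hB h1 h2 j
    have hlt := interlaced_pcLt hA hB h1 h2 i
    have mA := M_add_pcLt (A := I \ J) hij
    have mB := M_add_pcLt (A := J \ I) hij
    simp only [pcLe, pcLt] at hle hlt mA mB
    omega

lemma pcLt_bot {A : Finset (Fin n)} (hn : 0 < n) : pcLt A ⟨0, hn⟩ = 0 := by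
  rw [pcLt, Finset.card_eq_zero, Finset.filter_eq_empty_iff]
  intro t _
  simp only [not_lt]
  exact Fin.mk_le_of_le_val (Nat.zero_le _)

lemma sortedPair_of_M {I J : Finset (Fin n)} (hn : 0 < n) (hc : I.card = J.card)
    (h : ∀ i j : Fin n, i ≤ j → (M I i j : ℤ) - M J i j ≤ 1 ∧ (M J i j : ℤ) - M I i j ≤ 1) :
    SortedPair I J := by
  classical
  have hd : Disjoint (I \ J) (J \ I) := disjoint_sdiff_sdiff
  have hcard : (I \ J).card = (J \ I).card := Finset.card_sdiff_comm hc
  have hAB : ∀ i j : Fin n, i ≤ j →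
      (M (I \ J) i j : ℤ) - M (J \ I) i j ≤ 1 ∧ (M (J \ I) i j : ℤ) - M (I \ J) i j ≤ 1 := by
    intro i j hij
    have h1 := h i j hij
    have hs := M_sdiff_sub I J i j
    omega
  -- bound on the prefix difference g(x)
  have g1 : ∀ x : Fin n, (pcLe (I \ J) x : ℤ) - pcLe (J \ I) x ≤ 1 ∧
      (pcLe (J \ I) x : ℤ) - pcLe (I \ J) x ≤ 1 := by
    intro x
    have hzx : (⟨0, hn⟩ : Fin n) ≤ x := Fin.mk_le_of_le_val (Nat.zero_le _)
    have hb := hAB ⟨0, hn⟩ x hzx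
    have mA := M_add_pcLt (A := I \ J) hzx
    have mB := M_add_pcLt (A := J \ I) hzx
    have pA := pcLt_bot (A := I \ J) hn
    have pB := pcLt_bot (A := J \ I) hn
    omega
  -- consecutive differences
  have g2 : ∀ x y : Fin n, x < y →
      ((pcLe (I \ J) y : ℤ) - pcLe (J \ I) y) - ((pcLe (I \ J) x : ℤ) - pcLe (J \ I) x) ≤ 1 ∧
      ((pcLe (I \ J) x : ℤ) - pcLe (J \ I) x) - ((pcLe (I \ J) y : ℤ) - pcLe (J \ I) y) ≤ 1 := by
    intro x y hxy
    have hx1 : x.val + 1 < n := lt_of_le_of_lt (Nat.succ_le_of_lt hxy) y.isLt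
    have hiy : (⟨x.val + 1, hx1⟩ : Fin n) ≤ y := Nat.succ_le_of_lt hxy
    have hb := hAB ⟨x.val + 1, hx1⟩ y hiy
    have mA := M_add_pcLt (A := I \ J) hiy
    have mB := M_add_pcLt (A := J \ I) hiy
    have eA : pcLt (I \ J) ⟨x.val + 1, hx1⟩ = pcLe (I \ J) x := by
      rw [pcLt, pcLe]
      congr 1
      apply Finset.filter_congr
      intro t _
      simp only [Fin.lt_def, Fin.le_def]
      omega
    have eB : pcLt (J \ I) ⟨x.val + 1, hx1⟩ = pcLe (J \ I) x := by
      rw [pcLt, pcLe]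
      congr 1
      apply Finset.filter_congr
      intro t _
      simp only [Fin.lt_def, Fin.le_def]
      omega
    rw [eA] at mA
    rw [eB] at mB
    omega
  by_cases hpos : ∀ x, pcLe (J \ I) x ≤ pcLe (I \ J) x
  · left
    have hv : Interlaced (I \ J) (J \ I) :=
      interlaced_of_pc hd rfl hcard.symm hpos (fun x => by have := g1 x; omega)
    exact interlaced_congr (by ext t; simp [Finset.mem_sdiff])
      (by ext t; simp [Finset.mem_sdiff]) hv
  · right
    push_neg at hpos
    obtain ⟨x0, hx0⟩ := hpos
    have hv : Interlaced (J \ I) (I \ J) := by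
      refine interlaced_of_pc hd.symm hcard.symm rfl ?_ ?_
      · intro x
        by_contra hcon
        push_neg at hcon
        rcases lt_trichotomy x x0 with hlt | heq | hgt
        · have := g2 x x0 hlt
          have := g1 x
          have := g1 x0
          omega
        · subst heq; omega
        · have := g2 x0 x hgt
          have := g1 x
          have := g1 x0
          omega
      · intro x
        have := g1 x
        omega
    exact interlaced_congr (by ext t; simp [Finset.mem_sdiff])
      (by ext t; simp [Finset.mem_sdiff]) hv

lemma sum_indic (I : Finset (Fin n)) (i j : Fin n) :
    ∑ t ∈ Finset.Icc i j, indic n I t = (M I i j : ℝ) := by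
  unfold indic M
  rw [Finset.sum_boole]

theorem mem_maximal_sorted_iff_not_separated (k n : ℕ) (hk : 0 < k) (hkn : k < n)
    (S : Finset (Finset (Fin n))) (hS : MaxSortedColl k n S)
    (J : Finset (Fin n)) (hJ : J.card = k) :
    J ∈ S ↔ ∀ (i j : Fin n), i ≤ j → ∀ r : ℤ, ¬ Separates n S J i j r := by
  have hn : 0 < n := lt_trans hk hkn
  constructor
  · intro hJS i j hij r hsep
    have hxJ : indic n J ∈ polytope n S :=
      subset_convexHull ℝ _ ⟨J, Finset.mem_coe.2 hJS, rfl⟩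
    rcases hsep with ⟨h1, h2⟩ | ⟨h1, h2⟩
    · exact absurd (h1 _ hxJ) (not_le.2 h2)
    · exact absurd (h1 _ hxJ) (not_le.2 h2)
  · intro h
    have hlin : ∀ i j : Fin n,
        IsLinearMap ℝ (fun x : Fin n → ℝ => ∑ t ∈ Finset.Icc i j, x t) := fun i j =>
      ⟨fun a b => by simp [Finset.sum_add_distrib],
       fun c a => by simp [Finset.mul_sum]⟩
    have key : ∀ I ∈ S, ∀ i j : Fin n, i ≤ j →
        (M I i j : ℤ) - M J i j ≤ 1 ∧ (M J i j : ℤ) - M I i j ≤ 1 := by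
      intro I hI i j hij
      constructor
      · by_contra hcon
        push_neg at hcon
        apply h i j hij ((M J i j : ℤ) + 1)
        right
        constructor
        · intro x hx
          have hconv : Convex ℝ
              {w : Fin n → ℝ | (((M J i j : ℤ) + 1 : ℤ) : ℝ) ≤ ∑ t ∈ Finset.Icc i j, w t} :=
            convex_halfSpace_ge (hlin i j) _
          have hsub : indic n '' (↑S : Set (Finset (Fin n))) ⊆
              {w : Fin n → ℝ | (((M J i j : ℤ) + 1 : ℤ) : ℝ) ≤ ∑ t ∈ Finset.Icc i j, w t} := by
            rintro _ ⟨I', hI', rfl⟩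
            have hI'S : I' ∈ S := Finset.mem_coe.1 hI'
            have hsp := M_bound_of_sortedPair (hS.1.2 I hI I' hI'S) hij
            have hbig : (M J i j : ℤ) + 1 ≤ (M I' i j : ℤ) := by omega
            rw [Set.mem_setOf_eq, sum_indic]
            exact_mod_cast hbig
          exact convexHull_min hsub hconv hx
        · rw [sum_indic]
          push_cast
          linarith
      · by_contra hcon
        push_neg at hcon
        apply h i j hij ((M J i j : ℤ) - 1)
        left
        constructor
        · intro x hx
          have hconv : Convex ℝ
              {w : Fin n → ℝ | ∑ t ∈ Finset.Icc i j, w t ≤ (((M J i j : ℤ) - 1 : ℤ) : ℝ)} :=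
            convex_halfSpace_le (hlin i j) _
          have hsub : indic n '' (↑S : Set (Finset (Fin n))) ⊆
              {w : Fin n → ℝ | ∑ t ∈ Finset.Icc i j, w t ≤ (((M J i j : ℤ) - 1 : ℤ) : ℝ)} := by
            rintro _ ⟨I', hI', rfl⟩
            have hI'S : I' ∈ S := Finset.mem_coe.1 hI'
            have hsp := M_bound_of_sortedPair (hS.1.2 I hI I' hI'S) hij
            have hsmall : (M I' i j : ℤ) ≤ (M J i j : ℤ) - 1 := by omega
            rw [Set.mem_setOf_eq, sum_indic]
            exact_mod_cast hsmall
          exact convexHull_min hsub hconv hx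
        · rw [sum_indic]
          push_cast
          linarith
    have hsorted : ∀ I ∈ S, SortedPair J I := by
      intro I hI
      refine sortedPair_of_M hn (by rw [hJ, hS.1.1 I hI]) ?_
      intro i j hij
      exact ⟨(key I hI i j hij).2, (key I hI i j hij).1⟩
    have hJJ : SortedPair J J := by
      left
      refine ⟨0, by simp, by simp, fun i => i.elim0, fun i _ _ => i.elim0⟩
    have hT : SortedColl k n (insert J S) := by
      constructor
      · intro I hI
        rcases Finset.mem_insert.1 hI with rfl | hI
        · exact hJ
        · exact hS.1.1 I hI
      · intro I1 h1 I2 h2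
        rcases Finset.mem_insert.1 h1 with e1 | m1
        · rcases Finset.mem_insert.1 h2 with e2 | m2
          · rw [e1, e2]; exact hJJ
          · rw [e1]; exact hsorted _ m2
        · rcases Finset.mem_insert.1 h2 with e2 | m2
          · rw [e2]; exact Or.symm (hsorted _ m1)
          · exact hS.1.2 _ m1 _ m2
    have heq := hS.2 _ hT (Finset.subset_insert _ _)
    rw [heq]
    exact Finset.mem_insert_self _ _

end Stmt12
end

section
/- Let k, m ≥ 1. Every maximal (by containment) arrangement of largest entries of a totally positive k×m matrix contains exactly k + m − 1 entries; the maximal arrangements of largest entries are exactly the vertex sets of monotone lattice paths from position (1,1) to position (k,m), and the number of maximal arrangements of largest entries equals binom(k+m−2, k−1). -/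
namespace Stmt16

/-- A totally positive matrix: all its minors of all sizes are positive. -/
def TotallyPositive (k m : ℕ) (A : Matrix (Fin k) (Fin m) ℝ) : Prop :=
  ∀ (r : ℕ) (f : Fin r → Fin k) (g : Fin r → Fin m),
    StrictMono f → StrictMono g → 0 < (A.submatrix f g).det

/-- An arrangement of largest entries of a totally positive `k×m` matrix.
Positions are 0-based. -/
def IsArrLargestEntries (k m : ℕ) (E : Finset (Fin k × Fin m)) : Prop :=
  ∃ (A : Matrix (Fin k) (Fin m) ℝ) (v : ℝ), TotallyPositive k m A ∧
    (∀ p ∈ E, A p.1 p.2 = v) ∧ ∀ p : Fin k × Fin m, p ∉ E → A p.1 p.2 < v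

/-- A maximal (by containment) arrangement of largest entries. -/
def MaxArrLargestEntries (k m : ℕ) (E : Finset (Fin k × Fin m)) : Prop :=
  IsArrLargestEntries k m E ∧
    ∀ E' : Finset (Fin k × Fin m), IsArrLargestEntries k m E' → E ⊆ E' → E = E'

/-- A step of a monotone lattice path: one coordinate increases by `1`. -/
def LatticeStep {k m : ℕ} (p q : Fin k × Fin m) : Prop :=
  ((q.1 : ℕ) = (p.1 : ℕ) + 1 ∧ q.2 = p.2) ∨ (q.1 = p.1 ∧ (q.2 : ℕ) = (p.2 : ℕ) + 1)

/-- `E` is the vertex set of a monotone lattice path from position `(1,1)` to `(k,m)`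
(in 0-based coordinates, from `(0,0)` to `(k−1,m−1)`). -/
def IsLatticePathSet (k m : ℕ) (E : Finset (Fin k × Fin m)) : Prop :=
  ∃ l : List (Fin k × Fin m), l.Chain' LatticeStep ∧
    (∃ p, l.head? = some p ∧ (p.1 : ℕ) = 0 ∧ (p.2 : ℕ) = 0) ∧
    (∃ q, l.getLast? = some q ∧ (q.1 : ℕ) = k - 1 ∧ (q.2 : ℕ) = m - 1) ∧
    E = l.toFinset

lemma indep : ∀ (r : ℕ) (ε : Fin r → ℝ), StrictMono ε → ∀ (c : Fin r → ℝ) (y : Fin r → ℝ), StrictMono y →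
    (∀ a, ∑ b, c b * Real.exp (ε b * y a) = 0) → ∀ b, c b = 0 := by
  intro r
  induction r with
  | zero => intro ε _ c y _ _ b; exact b.elim0
  | succ r ih =>
    intro ε hε c y hy hz
    set g : ℝ → ℝ := fun x => ∑ b, c b * Real.exp ((ε b - ε 0) * x) with hgdef
    set g' : ℝ → ℝ := fun x => ∑ b, c b * (ε b - ε 0) * Real.exp ((ε b - ε 0) * x) with hg'def
    have hgd : ∀ x : ℝ, HasDerivAt g (g' x) x := by
      intro x
      have h2 : HasDerivAt g (∑ b, c b * ((Real.exp ((ε b - ε 0) * x)) * (ε b - ε 0))) x := by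
        apply HasDerivAt.fun_sum
        intro b _
        have h1 : HasDerivAt (fun x : ℝ => (ε b - ε 0) * x) (ε b - ε 0) x := by
          simpa using (hasDerivAt_id x).const_mul (ε b - ε 0)
        exact (h1.exp).const_mul (c b)
      convert h2 using 1
      exact Finset.sum_congr rfl fun b _ => by ring
    have hgc : Continuous g := by
      rw [hgdef]; fun_prop
    have hgz : ∀ a, g (y a) = 0 := by
      intro a
      have h3 : g (y a) = (∑ b, c b * Real.exp (ε b * y a)) * Real.exp (-(ε 0 * y a)) := by
        rw [hgdef]
        simp only []
        rw [Finset.sum_mul]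
        apply Finset.sum_congr rfl
        intro b _
        rw [mul_assoc, ← Real.exp_add]
        congr 2
        ring
      rw [h3, hz a, zero_mul]
    have hroll : ∀ a : Fin r, ∃ z ∈ Set.Ioo (y a.castSucc) (y a.succ), g' z = 0 := by
      intro a
      apply exists_hasDerivAt_eq_zero (hy (Fin.castSucc_lt_succ (i := a)))
        hgc.continuousOn (by rw [hgz, hgz])
      intro x _; exact hgd x
    choose z hz1 hz2 using hroll
    have hzm : StrictMono z := by
      intro a a' haa'
      calc z a < y a.succ := (hz1 a).2
        _ ≤ y a'.castSucc := by
            apply hy.monotone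
            rw [Fin.le_def]
            rw [Fin.lt_def] at haa'
            simp only [Fin.val_succ, Fin.coe_castSucc]
            omega
        _ < z a' := (hz1 a').1
    have hsucc : ∀ b : Fin r, c b.succ = 0 := by
      have hih := ih (fun b => ε b.succ - ε 0) (by
          intro b b' hb
          have : (b.succ : Fin (r+1)) < b'.succ := by simpa using hb
          have := hε this
          simp only []
          linarith) (fun b => c b.succ * (ε b.succ - ε 0)) z hzm (by
          intro a
          have h0 : (∑ b : Fin (r+1), c b * (ε b - ε 0) * Real.exp ((ε b - ε 0) * z a)) = 0 := hz2 a
          rw [Fin.sum_univ_succ] at h0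
          simpa using h0)
      intro b
      have hb := hih b
      have hpos : ε 0 < ε b.succ := hε (Fin.succ_pos b)
      rcases mul_eq_zero.1 hb with h | h
      · exact h
      · have h' : ε b.succ - ε 0 = 0 := h
        linarith
    have hc0 : c 0 = 0 := by
      have h0 := hz 0
      rw [Fin.sum_univ_succ] at h0
      simp only [hsucc, zero_mul, Finset.sum_const_zero, add_zero] at h0
      have hp : Real.exp (ε 0 * y 0) > 0 := Real.exp_pos _
      rcases mul_eq_zero.1 h0 with h | h
      · exact h
      · linarith
    intro b
    rcases Fin.eq_zero_or_eq_succ b with rfl | ⟨b', rfl⟩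
    · exact hc0
    · exact hsucc b'

lemma gv_ne_zero (r : ℕ) (ξ ε : Fin r → ℝ) (hξ : StrictMono ξ) (hε : StrictMono ε) :
    (Matrix.of fun a b : Fin r => Real.exp (ξ a * ε b)).det ≠ 0 := by
  intro hdet
  obtain ⟨v, hv0, hmv⟩ := (Matrix.exists_mulVec_eq_zero_iff).2 hdet
  have hall : ∀ b, v b = 0 := by
    apply indep r ε hε v ξ hξ
    intro a
    have h := congrFun hmv a
    simp only [Matrix.mulVec, dotProduct, Matrix.of_apply, Pi.zero_apply] at h
    rw [← h]
    apply Finset.sum_congr rfl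
    intro b _
    rw [mul_comm (ξ a) (ε b), mul_comm]
  exact hv0 (funext hall)

lemma gv_pos (r : ℕ) (ξ ε : Fin r → ℝ) (hξ : StrictMono ξ) (hε : StrictMono ε) :
    0 < (Matrix.of fun a b : Fin r => Real.exp (ξ a * ε b)).det := by
  set F : ℝ → ℝ := fun t => (Matrix.of fun a b : Fin r => Real.exp (ξ a * ((1-t) * ε b + t * (b : ℝ)))).det with hF
  have hmono : ∀ t ∈ Set.Icc (0:ℝ) 1, StrictMono (fun b : Fin r => (1-t) * ε b + t * (b : ℝ)) := by
    intro t ht b b' hb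
    have h1 : ε b < ε b' := hε hb
    have h2 : (b : ℝ) < (b' : ℝ) := by exact_mod_cast hb
    simp only []
    rcases lt_or_ge t 1 with h | h
    · nlinarith [ht.1, ht.2]
    · nlinarith [ht.1, ht.2]
  have hne : ∀ t ∈ Set.Icc (0:ℝ) 1, F t ≠ 0 := fun t ht => gv_ne_zero r ξ _ hξ (hmono t ht)
  have hcont : ContinuousOn F (Set.Icc 0 1) := by
    apply Continuous.continuousOn
    apply Continuous.matrix_det
    apply continuous_matrix
    intro a b
    simp only [Matrix.of_apply]
    fun_prop
  have hF1 : 0 < F 1 := by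
    have hv : F 1 = (Matrix.vandermonde fun a => Real.exp (ξ a)).det := by
      show (Matrix.of fun a b : Fin r => Real.exp (ξ a * ((1-(1:ℝ)) * ε b + 1 * (b : ℝ)))).det = _
      congr 1
      funext a b
      simp only [Matrix.of_apply, Matrix.vandermonde]
      rw [show ξ a * ((1-(1:ℝ)) * ε b + 1 * (b:ℝ)) = (b:ℝ) * ξ a by ring, Real.exp_nat_mul]
    rw [hv, Matrix.det_vandermonde]
    apply Finset.prod_pos; intro i _; apply Finset.prod_pos; intro j hj
    have h1 : ξ i < ξ j := hξ (Finset.mem_Ioi.1 hj)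
    have h2 := Real.exp_lt_exp.2 h1
    linarith
  have hF0 : F 0 = (Matrix.of fun a b : Fin r => Real.exp (ξ a * ε b)).det := by
    show (Matrix.of fun a b : Fin r => Real.exp (ξ a * ((1-(0:ℝ)) * ε b + 0 * (b : ℝ)))).det = _
    congr 1; funext a b; norm_num
  rcases lt_trichotomy (F 0) 0 with h | h | h
  · exfalso
    obtain ⟨t, ht, hFt⟩ := intermediate_value_Icc zero_le_one hcont ⟨le_of_lt h, le_of_lt hF1⟩
    exact hne t ht hFt
  · exact absurd h (hne 0 ⟨le_rfl, zero_le_one⟩)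
  · rw [← hF0]; exact h


/-- A path function. -/
def PFun (k m : ℕ) (r : ℕ → ℕ) : Prop :=
  r 0 = 0 ∧ (∀ t, r (t+1) = r t ∨ r (t+1) = r t + 1) ∧ r (k+m-2) = k-1

section PF

variable {k m : ℕ} {r : ℕ → ℕ}

lemma pf_mono (hr : PFun k m r) : Monotone r :=
  monotone_nat_of_le_succ (fun t => by rcases hr.2.1 t with h | h <;> omega)

lemma pf_le (hr : PFun k m r) : ∀ t, r t ≤ t := by
  intro t
  induction t with
  | zero => exact Nat.le_of_eq hr.1
  | succ t ih => rcases hr.2.1 t with h | h <;> omega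

lemma pf_le' (hr : PFun k m r) : r 0 ≤ 0 := by rw [hr.1]

lemma pf_bound (hr : PFun k m r) : ∀ t ≤ k+m-2, r t ≤ k-1 := by
  intro t ht
  have h1 : r t ≤ r (k+m-2) := pf_mono hr ht
  have h2 := hr.2.2
  omega

lemma pf_cmono (hr : PFun k m r) : Monotone (fun t => t - r t) := by
  apply monotone_nat_of_le_succ
  intro t
  have h1 := hr.2.1 t
  have h2 := pf_le hr t
  show t - r t ≤ t + 1 - r (t+1)
  omega

lemma pf_cstep (hr : PFun k m r) : ∀ t, (t+1) - r (t+1) = (t - r t) ∨ (t+1) - r (t+1) = (t - r t) + 1 := by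
  intro t
  have h1 := hr.2.1 t
  have h2 := pf_le hr t
  omega

lemma pf_cbound (hk : 0 < k) (hm : 0 < m) (hr : PFun k m r) : ∀ t ≤ k+m-2, t - r t ≤ m-1 := by
  intro t ht
  have h1 : t - r t ≤ (k+m-2) - r (k+m-2) := pf_cmono hr ht
  have h2 := hr.2.2
  omega

/-- The vertex of the path at time `t`. -/
def vtx (hk : 0 < k) (hm : 0 < m) (r : ℕ → ℕ) (t : ℕ) : Fin k × Fin m :=
  (⟨min (r t) (k-1), by omega⟩, ⟨min (t - r t) (m-1), by omega⟩)

lemma vtx_fst (hk : 0 < k) (hm : 0 < m) (hr : PFun k m r) {t : ℕ} (ht : t ≤ k+m-2) :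
    ((vtx hk hm r t).1 : ℕ) = r t := by
  simp [vtx, min_eq_left (pf_bound hr t ht)]

lemma vtx_snd (hk : 0 < k) (hm : 0 < m) (hr : PFun k m r) {t : ℕ} (ht : t ≤ k+m-2) :
    ((vtx hk hm r t).2 : ℕ) = t - r t := by
  simp [vtx, min_eq_left (pf_cbound hk hm hr t ht)]

/-- The vertex set of the path. -/
def Epf (hk : 0 < k) (hm : 0 < m) (r : ℕ → ℕ) : Finset (Fin k × Fin m) :=
  (Finset.range (k+m-1)).image (vtx hk hm r)

lemma mem_Epf (hk : 0 < k) (hm : 0 < m) (hr : PFun k m r) {p : Fin k × Fin m} :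
    p ∈ Epf hk hm r ↔ ∃ t ≤ k+m-2, r t = (p.1 : ℕ) ∧ t - r t = (p.2 : ℕ) := by
  constructor
  · rintro h
    obtain ⟨t, ht, hv⟩ := Finset.mem_image.1 h
    rw [Finset.mem_range] at ht
    have ht' : t ≤ k+m-2 := by omega
    refine ⟨t, ht', ?_, ?_⟩
    · rw [← hv, vtx_fst hk hm hr ht']
    · rw [← hv, vtx_snd hk hm hr ht']
  · rintro ⟨t, ht, h1, h2⟩
    apply Finset.mem_image.2
    refine ⟨t, Finset.mem_range.2 (by omega), ?_⟩
    apply Prod.ext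
    · apply Fin.ext; rw [vtx_fst hk hm hr ht]; exact h1
    · apply Fin.ext; rw [vtx_snd hk hm hr ht]; exact h2

lemma Epf_isPath (hk : 0 < k) (hm : 0 < m) (hr : PFun k m r) :
    IsLatticePathSet k m (Epf hk hm r) := by
  refine ⟨(List.range (k+m-1)).map (vtx hk hm r), ?_, ?_, ?_, ?_⟩
  · show List.IsChain _ _
    rw [List.isChain_map]
    rw [show k+m-1 = (k+m-2)+1 by omega]
    rw [List.isChain_range_succ]
    intro t ht
    have ht1 : t ≤ k+m-2 := by omega
    have ht2 : t+1 ≤ k+m-2 := by omega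
    have hrle := pf_le hr t
    have hrle2 := pf_le hr (t+1)
    rcases hr.2.1 t with h | h
    · right
      constructor
      · apply Fin.ext
        rw [vtx_fst hk hm hr ht2, vtx_fst hk hm hr ht1, h]
      · rw [vtx_snd hk hm hr ht2, vtx_snd hk hm hr ht1]
        omega
    · left
      constructor
      · rw [vtx_fst hk hm hr ht2, vtx_fst hk hm hr ht1, h]
      · apply Fin.ext
        rw [vtx_snd hk hm hr ht2, vtx_snd hk hm hr ht1]
        omega
  · refine ⟨vtx hk hm r 0, ?_, ?_, ?_⟩
    · rw [show k+m-1 = (k+m-2)+1 by omega, List.range_succ_eq_map]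
      simp
    · rw [vtx_fst hk hm hr (by omega), hr.1]
    · rw [vtx_snd hk hm hr (by omega), hr.1]
  · refine ⟨vtx hk hm r (k+m-2), ?_, ?_, ?_⟩
    · rw [show k+m-1 = (k+m-2)+1 by omega, List.range_succ, List.map_append]
      simp
    · rw [vtx_fst hk hm hr le_rfl, hr.2.2]
    · rw [vtx_snd hk hm hr le_rfl, hr.2.2]
      omega
  · ext p
    simp only [Epf, Finset.mem_image, Finset.mem_range, List.mem_toFinset, List.mem_map,
      List.mem_range]

lemma Epf_card (hk : 0 < k) (hm : 0 < m) (hr : PFun k m r) : (Epf hk hm r).card = k+m-1 := by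
  rw [Epf, Finset.card_image_of_injOn, Finset.card_range]
  intro t ht t' ht' hv
  rw [Finset.mem_coe, Finset.mem_range] at ht ht'
  have ht1 : t ≤ k+m-2 := by omega
  have ht2 : t' ≤ k+m-2 := by omega
  have e1 : ((vtx hk hm r t).1 : ℕ) + ((vtx hk hm r t).2 : ℕ) = t := by
    rw [vtx_fst hk hm hr ht1, vtx_snd hk hm hr ht1]
    have := pf_le hr t; omega
  have e2 : ((vtx hk hm r t').1 : ℕ) + ((vtx hk hm r t').2 : ℕ) = t' := by
    rw [vtx_fst hk hm hr ht2, vtx_snd hk hm hr ht2]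
    have := pf_le hr t'; omega
  rw [hv] at e1
  omega

def IsChainSet {k m : ℕ} (E : Finset (Fin k × Fin m)) : Prop :=
  ∀ p ∈ E, ∀ q ∈ E, ((p.1:ℕ) ≤ (q.1:ℕ) ∧ (p.2:ℕ) ≤ (q.2:ℕ)) ∨ ((q.1:ℕ) ≤ (p.1:ℕ) ∧ (q.2:ℕ) ≤ (p.2:ℕ))

lemma Epf_chain (hk : 0 < k) (hm : 0 < m) (hr : PFun k m r) : IsChainSet (Epf hk hm r) := by
  intro p hp q hq
  obtain ⟨t, ht, h1, h2⟩ := (mem_Epf hk hm hr).1 hp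
  obtain ⟨t', ht', h1', h2'⟩ := (mem_Epf hk hm hr).1 hq
  rcases le_total t t' with h | h
  · left
    have hm1 : r t ≤ r t' := pf_mono hr h
    have hm2 : t - r t ≤ t' - r t' := pf_cmono hr h
    omega
  · right
    have hm1 : r t' ≤ r t := pf_mono hr h
    have hm2 : t' - r t' ≤ t - r t := pf_cmono hr h
    omega

lemma Epf_max (hk : 0 < k) (hm : 0 < m) (hr : PFun k m r) {E' : Finset (Fin k × Fin m)}
    (hsub : Epf hk hm r ⊆ E') (hch : IsChainSet E') : E' = Epf hk hm r := by
  apply Finset.Subset.antisymm _ hsub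
  intro p hp
  set t := (p.1 : ℕ) + (p.2 : ℕ) with htdef
  have htb : t ≤ k+m-2 := by
    have := p.1.isLt; have := p.2.isLt; omega
  have hq : vtx hk hm r t ∈ Epf hk hm r := by
    apply (mem_Epf hk hm hr).2
    exact ⟨t, htb, (vtx_fst hk hm hr htb).symm, (vtx_snd hk hm hr htb).symm⟩
  have hcmp := hch p hp _ (hsub hq)
  have e1 : ((vtx hk hm r t).1 : ℕ) = r t := vtx_fst hk hm hr htb
  have e2 : ((vtx hk hm r t).2 : ℕ) = t - r t := vtx_snd hk hm hr htb
  have hle := pf_le hr t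
  have heq : p = vtx hk hm r t := by
    apply Prod.ext <;> apply Fin.ext <;> omega
  rw [heq]; exact hq

lemma nat_exists_jump (f : ℕ → ℕ) (hf : ∀ t, f (t+1) = f t ∨ f (t+1) = f t + 1) :
    ∀ (T v : ℕ), f 0 ≤ v → v < f T → ∃ t, t < T ∧ f t = v ∧ f (t+1) = v + 1 := by
  intro T
  induction T with
  | zero => intro v h1 h2; omega
  | succ T ih =>
    intro v h1 h2
    rcases le_or_gt (f T) v with h | h
    · exact ⟨T, by omega, by rcases hf T with h' | h' <;> omega, by rcases hf T with h' | h' <;> omega⟩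
    · obtain ⟨t, ht, he⟩ := ih v h1 h
      exact ⟨t, by omega, he⟩

lemma nat_exists_eq (f : ℕ → ℕ) (hf : ∀ t, f (t+1) = f t ∨ f (t+1) = f t + 1) :
    ∀ (T v : ℕ), f 0 ≤ v → v ≤ f T → ∃ t, t ≤ T ∧ f t = v := by
  intro T v h1 h2
  rcases eq_or_lt_of_le h2 with h | h
  · exact ⟨T, le_rfl, h.symm⟩
  · obtain ⟨t, ht, he, _⟩ := nat_exists_jump f hf T v h1 h
    exact ⟨t, by omega, he⟩

/-- Extension of a chain to a lattice path. -/
lemma chain_ext (hk : 0 < k) (hm : 0 < m) {E : Finset (Fin k × Fin m)} (hch : IsChainSet E) :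
    ∃ r', PFun k m r' ∧ E ⊆ Epf hk hm r' := by
  set r' : ℕ → ℕ := fun t => max (t - (m-1)) (E.sup fun p => min (p.1 : ℕ) (t - (p.2 : ℕ))) with hr'def
  have hsup_le : ∀ t b, (∀ p ∈ E, min (p.1:ℕ) (t - (p.2:ℕ)) ≤ b) →
      (E.sup fun p => min (p.1 : ℕ) (t - (p.2 : ℕ))) ≤ b := fun t b h => Finset.sup_le h
  have hr' : PFun k m r' := by
    refine ⟨?_, ?_, ?_⟩
    · rw [hr'def]
      simp only []
      rw [Nat.max_eq_right]
      · apply Nat.le_antisymm _ (Nat.zero_le _)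
        apply hsup_le
        intro p _
        omega
      · omega
    · intro t
      have hmono : r' t ≤ r' (t+1) := by
        rw [hr'def]
        apply max_le_max
        · omega
        · apply Finset.sup_mono_fun
          intro p _
          omega
      have hup : r' (t+1) ≤ r' t + 1 := by
        rw [hr'def]
        simp only []
        apply max_le
        · omega
        · apply hsup_le
          intro p hp
          have h1 : min (p.1:ℕ) (t - (p.2:ℕ)) ≤ E.sup fun p => min (p.1 : ℕ) (t - (p.2 : ℕ)) :=
            Finset.le_sup (f := fun p => min (p.1 : ℕ) (t - (p.2 : ℕ))) hp
          have h2 : (E.sup fun p => min (p.1 : ℕ) (t - (p.2 : ℕ))) ≤ r' t := le_max_right _ _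
          omega
      omega
    · apply Nat.le_antisymm
      · rw [hr'def]
        apply max_le
        · omega
        · apply hsup_le
          intro p _
          have := p.1.isLt
          omega
      · rw [hr'def]
        have : k+m-2 - (m-1) = k-1 := by omega
        rw [← this]
        exact le_max_left _ _
  refine ⟨r', hr', ?_⟩
  intro p hp
  set t := (p.1 : ℕ) + (p.2 : ℕ) with htdef
  have hp2 := p.2.isLt
  have hp1 := p.1.isLt
  have hre : r' t = (p.1 : ℕ) := by
    apply Nat.le_antisymm
    · rw [hr'def]
      apply max_le
      · omega
      · apply hsup_le
        intro q hq
        rcases hch p hp q hq with ⟨h1, h2⟩ | ⟨h1, h2⟩ <;> omega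
    · calc (p.1 : ℕ) = min (p.1:ℕ) (t - (p.2:ℕ)) := by omega
        _ ≤ E.sup fun q => min (q.1 : ℕ) (t - (q.2 : ℕ)) :=
            Finset.le_sup (f := fun q => min (q.1 : ℕ) (t - (q.2 : ℕ))) hp
        _ ≤ r' t := le_max_right _ _
  apply (mem_Epf hk hm hr').2
  exact ⟨t, by omega, by omega, by omega⟩

lemma path_to_pf (hk : 0 < k) (hm : 0 < m) {E : Finset (Fin k × Fin m)}
    (hE : IsLatticePathSet k m E) : ∃ r', PFun k m r' ∧ E = Epf hk hm r' := by
  obtain ⟨l, hchain, ⟨p0, hp0, hp01, hp02⟩, ⟨q0, hq0, hq01, hq02⟩, hEl⟩ := hE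
  have hne : l ≠ [] := by
    intro h; rw [h] at hp0; simp at hp0
  have hlen0 : 0 < l.length := List.length_pos_iff.2 hne
  have hget : ∀ i (h : i < l.length - 1), LatticeStep (l.get ⟨i, by omega⟩) (l.get ⟨i+1, by omega⟩) :=
    fun i h => List.isChain_iff_getElem.1 hchain i (by omega)
  have hget0 : ∀ h : 0 < l.length, l.get ⟨0, h⟩ = p0 := by
    intro h
    cases l with
    | nil => exact absurd rfl hne
    | cons a l' => simp at hp0; simp [hp0]
  have hsum : ∀ i (h : i < l.length), ((l.get ⟨i,h⟩).1 : ℕ) + ((l.get ⟨i,h⟩).2 : ℕ) = i := by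
    intro i
    induction i with
    | zero => intro h; rw [hget0 hlen0]; omega
    | succ i ih =>
      intro h
      have hi : i < l.length := by omega
      have hi' : i < l.length - 1 := by omega
      have hstep := hget i hi'
      rcases hstep with ⟨h1, h2⟩ | ⟨h1, h2⟩
      · have := ih hi
        have h2' : ((l.get ⟨i+1, h⟩).2 : ℕ) = ((l.get ⟨i, hi⟩).2 : ℕ) := by rw [h2]
        omega
      · have := ih hi
        have h1' : ((l.get ⟨i+1, h⟩).1 : ℕ) = ((l.get ⟨i, hi⟩).1 : ℕ) := by rw [h1]
        omega
  have hgetlast : ∀ h : l.length - 1 < l.length, l.get ⟨l.length - 1, h⟩ = q0 := by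
    intro h
    rw [List.get_eq_getElem, ← List.getLast_eq_getElem hne]
    rwa [List.getLast?_eq_getLast hne, Option.some_inj] at hq0
  have hlen : l.length = k+m-1 := by
    have h2 := hsum (l.length - 1) (by omega)
    rw [hgetlast (by omega)] at h2
    omega
  set r' : ℕ → ℕ := fun i => if h : i < l.length then ((l.get ⟨i,h⟩).1 : ℕ) else k-1 with hr'def
  have hr'lt : ∀ i (h : i < l.length), r' i = ((l.get ⟨i,h⟩).1 : ℕ) := by
    intro i h; rw [hr'def]; simp [h]
  have hr'ge : ∀ i, l.length ≤ i → r' i = k-1 := by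
    intro i h; rw [hr'def]; simp [Nat.not_lt.2 h]
  have hr' : PFun k m r' := by
    refine ⟨?_, ?_, ?_⟩
    · rw [hr'lt 0 hlen0, hget0, hp01]
    · intro t
      rcases lt_or_ge (t+1) l.length with h | h
      · have ht : t < l.length := by omega
        have ht' : t < l.length - 1 := by omega
        rcases hget t ht' with ⟨h1, h2⟩ | ⟨h1, h2⟩
        · right; rw [hr'lt (t+1) h, hr'lt t ht]; exact h1
        · left; rw [hr'lt (t+1) h, hr'lt t ht, h1]
      · rcases lt_or_ge t l.length with h2 | h2
        · left
          have : t = l.length - 1 := by omega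
          rw [hr'ge (t+1) h, hr'lt t h2]
          subst this
          rw [hgetlast h2, hq01]
        · left; rw [hr'ge (t+1) h, hr'ge t h2]
    · have h1 : k+m-2 < l.length := by omega
      rw [hr'lt _ h1]
      have he : (⟨k+m-2, h1⟩ : Fin l.length) = ⟨l.length - 1, by omega⟩ := by
        apply Fin.ext; simp; omega
      rw [he, hgetlast (by omega), hq01]
  refine ⟨r', hr', ?_⟩
  have hvtx : ∀ i (h : i < l.length), vtx hk hm r' i = l.get ⟨i, h⟩ := by
    intro i h
    have hb1 := (l.get ⟨i,h⟩).1.isLt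
    have hb2 := (l.get ⟨i,h⟩).2.isLt
    have hs := hsum i h
    apply Prod.ext <;> apply Fin.ext
    · show min (r' i) (k-1) = _
      rw [hr'lt i h]; omega
    · show min (i - r' i) (m-1) = _
      rw [hr'lt i h]; omega
  rw [hEl]
  ext p
  rw [List.mem_toFinset, List.mem_iff_get]
  simp only [Epf, Finset.mem_image, Finset.mem_range]
  constructor
  · rintro ⟨n, hn⟩
    exact ⟨n, by omega, by rw [hvtx n n.isLt]; exact hn⟩
  · rintro ⟨t, ht, hv⟩
    have ht' : t < l.length := by omega
    exact ⟨⟨t, ht'⟩, by rw [← hvtx t ht']; exact hv⟩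

-- counting infrastructure

lemma pf_eq_on (hk : 0 < k) (hm : 0 < m) {r1 r2 : ℕ → ℕ} (h : ∀ t ≤ k+m-2, r1 t = r2 t) :
    Epf hk hm r1 = Epf hk hm r2 := by
  unfold Epf
  apply Finset.image_congr
  intro t ht
  rw [Finset.mem_coe, Finset.mem_range] at ht
  have he := h t (by omega)
  unfold vtx
  apply Prod.ext <;> apply Fin.ext
  · show min (r1 t) (k-1) = min (r2 t) (k-1)
    rw [he]
  · show min (t - r1 t) (m-1) = min (t - r2 t) (m-1)
    rw [he]

lemma Epf_inj (hk : 0 < k) (hm : 0 < m) {r1 r2 : ℕ → ℕ} (hr1 : PFun k m r1) (hr2 : PFun k m r2)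
    (h : Epf hk hm r1 = Epf hk hm r2) : ∀ t ≤ k+m-2, r1 t = r2 t := by
  intro t ht
  have h1 : vtx hk hm r1 t ∈ Epf hk hm r2 := by
    rw [← h]
    exact (mem_Epf hk hm hr1).2 ⟨t, ht, (vtx_fst hk hm hr1 ht).symm, (vtx_snd hk hm hr1 ht).symm⟩
  obtain ⟨t', ht', e1, e2⟩ := (mem_Epf hk hm hr2).1 h1
  rw [vtx_fst hk hm hr1 ht] at e1
  rw [vtx_snd hk hm hr1 ht] at e2
  have h3 := pf_le hr1 t
  have h4 := pf_le hr2 t'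
  have htt : t' = t := by omega
  subst htt
  omega

def rOfS {k m : ℕ} (S : Finset (Fin (k+m-2))) : ℕ → ℕ :=
  fun t => (S.filter (fun s => s.val < t)).card

lemma rOfS_succ {S : Finset (Fin (k+m-2))} {t : ℕ} (ht : t < k+m-2) :
    rOfS S (t+1) = rOfS S t + (if (⟨t, ht⟩ : Fin (k+m-2)) ∈ S then 1 else 0) := by
  unfold rOfS
  have hsplit : S.filter (fun s => s.val < t+1) =
      S.filter (fun s => s.val < t) ∪ S.filter (fun s => s.val = t) := by
    rw [← Finset.filter_or]
    apply Finset.filter_congr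
    intro s _
    omega
  rw [hsplit, Finset.card_union_of_disjoint]
  · congr 1
    by_cases hmem : (⟨t, ht⟩ : Fin (k+m-2)) ∈ S
    · rw [if_pos hmem]
      rw [show S.filter (fun s => s.val = t) = {⟨t, ht⟩} from ?_]
      · exact Finset.card_singleton _
      · ext s
        simp only [Finset.mem_filter, Finset.mem_singleton]
        constructor
        · rintro ⟨hs, he⟩
          apply Fin.ext; exact he
        · rintro rfl
          exact ⟨hmem, rfl⟩
    · rw [if_neg hmem]
      rw [Finset.card_eq_zero.2]
      rw [Finset.filter_eq_empty_iff]
      intro s hs he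
      exact hmem (by rwa [show (⟨t, ht⟩ : Fin (k+m-2)) = s from (Fin.ext he.symm)])
  · rw [Finset.disjoint_left]
    intro s h1 h2
    rw [Finset.mem_filter] at h1 h2
    omega

lemma rOfS_succ_ge {S : Finset (Fin (k+m-2))} {t : ℕ} (ht : k+m-2 ≤ t) :
    rOfS S (t+1) = rOfS S t := by
  unfold rOfS
  congr 1
  apply Finset.filter_congr
  intro s _
  have := s.isLt
  omega

lemma rOfS_pf (hk : 0 < k) (hm : 0 < m) {S : Finset (Fin (k+m-2))} (hS : S.card = k-1) :
    PFun k m (rOfS S) := by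
  refine ⟨?_, ?_, ?_⟩
  · unfold rOfS
    simp
  · intro t
    rcases lt_or_ge t (k+m-2) with h | h
    · rw [rOfS_succ h]
      split <;> omega
    · left; exact rOfS_succ_ge h
  · unfold rOfS
    rw [Finset.filter_true_of_mem (fun s _ => s.isLt), hS]

lemma rOfS_mem_iff {S : Finset (Fin (k+m-2))} (s : Fin (k+m-2)) :
    s ∈ S ↔ rOfS S ((s:ℕ)+1) = rOfS S (s:ℕ) + 1 := by
  rw [rOfS_succ s.isLt]
  constructor
  · intro h; rw [if_pos (by simpa using h)]
  · intro h
    by_contra hc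
    rw [if_neg (by simpa using hc)] at h
    omega

lemma rOfS_of (hk : 0 < k) (hm : 0 < m) {r : ℕ → ℕ} (hr : PFun k m r) :
    ∀ t ≤ k+m-2, rOfS (Finset.univ.filter fun s : Fin (k+m-2) => r ((s:ℕ)+1) = r (s:ℕ)+1) t = r t := by
  intro t
  induction t with
  | zero =>
    intro _
    rw [hr.1]
    unfold rOfS
    simp
  | succ t ih =>
    intro h
    have ht : t < k+m-2 := by omega
    rw [rOfS_succ ht, ih (by omega)]
    by_cases hc : r (t+1) = r t + 1
    · rw [if_pos (by simp [hc])]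
      omega
    · rw [if_neg (by simp [hc])]
      rcases hr.2.1 t with h' | h' <;> omega

end PF


section Main

variable {k m : ℕ}

lemma arr_chain {E : Finset (Fin k × Fin m)} (hE : IsArrLargestEntries k m E) : IsChainSet E := by
  obtain ⟨A, v, hTP, hEq, hLt⟩ := hE
  have hpos : ∀ i j, 0 < A i j := by
    intro i j
    have h := hTP 1 (fun _ => i) (fun _ => j)
      (fun a b hab => absurd (Subsingleton.elim a b) (by intro h; rw [h] at hab; exact lt_irrefl _ hab))
      (fun a b hab => absurd (Subsingleton.elim a b) (by intro h; rw [h] at hab; exact lt_irrefl _ hab))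
    rwa [Matrix.det_fin_one] at h
  have hle : ∀ i j, A i j ≤ v := by
    intro i j
    by_cases hmem : ((i, j) : Fin k × Fin m) ∈ E
    · exact le_of_eq (hEq _ hmem)
    · exact le_of_lt (hLt _ hmem)
  have key : ∀ p q : Fin k × Fin m, p ∈ E → q ∈ E → (p.1:ℕ) < (q.1:ℕ) → (q.2:ℕ) < (p.2:ℕ) → False := by
    intro p q hp hq h1 h2
    have hpq1 : p.1 < q.1 := by rw [Fin.lt_def]; exact h1
    have hpq2 : q.2 < p.2 := by rw [Fin.lt_def]; exact h2
    have hf : StrictMono (![p.1, q.1] : Fin 2 → Fin k) := by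
      intro a b hab
      fin_cases a <;> fin_cases b <;> simp_all
    have hg : StrictMono (![q.2, p.2] : Fin 2 → Fin m) := by
      intro a b hab
      fin_cases a <;> fin_cases b <;> simp_all
    have hdet := hTP 2 ![p.1, q.1] ![q.2, p.2] hf hg
    rw [Matrix.det_fin_two] at hdet
    simp only [Matrix.submatrix_apply, Matrix.cons_val_zero, Matrix.cons_val_one,
      Matrix.head_cons] at hdet
    have e1 : A p.1 p.2 = v := hEq p hp
    have e2 : A q.1 q.2 = v := hEq q hq
    have l1 : A p.1 q.2 ≤ v := hle _ _
    have l2 : A q.1 p.2 ≤ v := hle _ _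
    have p1 : 0 < A p.1 q.2 := hpos _ _
    have p2 : 0 < A q.1 p.2 := hpos _ _
    have hv : 0 < v := lt_of_lt_of_le p1 l1
    nlinarith [mul_le_mul l1 l2 (le_of_lt p2) (le_of_lt hv)]
  intro p hp q hq
  by_contra hc
  push_neg at hc
  obtain ⟨h1, h2⟩ := hc
  have hcase : ((p.1:ℕ) < (q.1:ℕ) ∧ (q.2:ℕ) < (p.2:ℕ)) ∨ ((q.1:ℕ) < (p.1:ℕ) ∧ (p.2:ℕ) < (q.2:ℕ)) := by
    omega
  rcases hcase with ⟨ha, hb⟩ | ⟨ha, hb⟩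
  · exact key p q hp hq ha hb
  · exact key q p hq hp ha hb


/-- On-path predicate. -/
def OnP {k m : ℕ} (r : ℕ → ℕ) (i : Fin k) (j : Fin m) : Prop :=
  ∃ t, t ≤ k+m-2 ∧ r t = (i:ℕ) ∧ t - r t = (j:ℕ)

lemma mem_Epf_onP (hk : 0 < k) (hm : 0 < m) {r : ℕ → ℕ} (hr : PFun k m r) (p : Fin k × Fin m) :
    p ∈ Epf hk hm r ↔ OnP r p.1 p.2 := by
  rw [mem_Epf hk hm hr]
  unfold OnP
  constructor
  · rintro ⟨t, h1, h2, h3⟩; exact ⟨t, h1, h2, h3⟩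
  · rintro ⟨t, h1, h2, h3⟩; exact ⟨t, h1, h2, h3⟩

lemma arr_Epf (hk : 0 < k) (hm : 0 < m) {r : ℕ → ℕ} (hr : PFun k m r) :
    IsArrLargestEntries k m (Epf hk hm r) := by
  classical
  have hrm := pf_mono hr
  have hrle := pf_le hr
  have hcm := pf_cmono hr
  -- the first-time function for columns
  have hτex : ∀ j : Fin m, ∃ t, (t - r t = (j:ℕ) ∧ t ≤ k+m-2) := by
    intro j
    obtain ⟨t, ht, he⟩ := nat_exists_eq (fun t => t - r t) (pf_cstep hr) (k+m-2) (j:ℕ)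
      (by simp [hr.1]) (by show (j:ℕ) ≤ k+m-2 - r (k+m-2); rw [hr.2.2]; have := j.isLt; omega)
    exact ⟨t, he, ht⟩
  set τ : Fin m → ℕ := fun j => Nat.find (hτex j) with hτdef
  have hτ1 : ∀ j, τ j - r (τ j) = (j:ℕ) := fun j => (Nat.find_spec (hτex j)).1
  have hτ2 : ∀ j, τ j ≤ k+m-2 := fun j => (Nat.find_spec (hτex j)).2
  have hτmin : ∀ (j : Fin m) (t : ℕ), t - r t = (j:ℕ) → t ≤ k+m-2 → τ j ≤ t :=
    fun j t h1 h2 => Nat.find_min' _ ⟨h1, h2⟩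
  set ι : Fin m → ℕ := fun j => r (τ j) with hιdef
  have hι_le : ∀ j, ι j ≤ k-1 := fun j => pf_bound hr _ (hτ2 j)
  -- the jump-time function for rows
  have hσex : ∀ s, s < k-1 → ∃ t, (r t = s ∧ r (t+1) = s+1) := by
    intro s hs
    obtain ⟨t, ht, h1, h2⟩ := nat_exists_jump r hr.2.1 (k+m-2) s
      (by rw [hr.1]; omega) (by rw [hr.2.2]; omega)
    exact ⟨t, h1, h2⟩
  set σ : ℕ → ℕ := fun s => if h : ∃ t, (r t = s ∧ r (t+1) = s+1) then Nat.find h else 0 with hσdef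
  have hσ1 : ∀ s, s < k-1 → r (σ s) = s ∧ r (σ s + 1) = s + 1 := by
    intro s hs
    have h := hσex s hs
    rw [hσdef]
    simp only [dif_pos h]
    exact Nat.find_spec h
  have hσbd : ∀ s, s < k-1 → σ s ≤ k+m-2 := by
    intro s hs
    obtain ⟨t, ht, h1, h2⟩ := nat_exists_jump r hr.2.1 (k+m-2) s
      (by rw [hr.1]; omega) (by rw [hr.2.2]; omega)
    have hh : ∃ t, (r t = s ∧ r (t+1) = s+1) := ⟨t, h1, h2⟩
    have : σ s ≤ t := by
      rw [hσdef]
      simp only [dif_pos hh]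
      exact Nat.find_min' hh ⟨h1, h2⟩
    omega
  set W : ℕ → ℕ := fun s => σ s - s with hWdef
  have hWc : ∀ s, s < k-1 → σ s - r (σ s) = W s := by
    intro s hs; rw [(hσ1 s hs).1]
  -- W s ≥ j when ι j ≤ s
  have hWge : ∀ s, s < k-1 → ∀ j : Fin m, ι j ≤ s → (j:ℕ) ≤ W s := by
    intro s hs j hij
    have hτσ : τ j ≤ σ s := by
      by_contra hcon
      push_neg at hcon
      have h1 : σ s + 1 ≤ τ j := hcon
      have h2 : r (σ s + 1) ≤ r (τ j) := hrm h1
      rw [(hσ1 s hs).2] at h2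
      have h3 : s + 1 ≤ ι j := by rw [hιdef]; exact h2
      omega
    have := hcm hτσ
    rw [← hWc s hs]
    have hc1 : τ j - r (τ j) ≤ σ s - r (σ s) := this
    rw [hτ1 j] at hc1
    exact hc1
  -- W s ≤ c t when s < r t
  have hWle2 : ∀ s, s < k-1 → ∀ t : ℕ, s < r t → W s ≤ t - r t := by
    intro s hs t hst
    have hσt : σ s < t := by
      by_contra hcon
      push_neg at hcon
      have : r t ≤ r (σ s) := hrm hcon
      rw [(hσ1 s hs).1] at this
      omega
    have := hcm (le_of_lt hσt)
    rw [← hWc s hs]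
    exact this
  -- W s ≤ j when s < ι j
  have hWle : ∀ s, s < k-1 → ∀ j : Fin m, s < ι j → W s ≤ (j:ℕ) := by
    intro s hs j hij
    have := hWle2 s hs (τ j) hij
    rwa [hτ1 j] at this
  -- strictness in case B : W I < J
  have hWB : ∀ (i : Fin k) (j : Fin m), (i:ℕ) < ι j → W (i:ℕ) < (j:ℕ) := by
    intro i j hij
    have hik : (i:ℕ) < k-1 := by have := hι_le j; omega
    have hle' := hWle (i:ℕ) hik j hij
    rcases lt_or_eq_of_le hle' with h | h
    · exact h
    · exfalso
      have hσb := hσbd (i:ℕ) hik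
      have hcσ : σ (i:ℕ) - r (σ (i:ℕ)) = (j:ℕ) := by rw [hWc _ hik]; exact h
      have := hτmin j (σ (i:ℕ)) hcσ hσb
      have h2 : ι j ≤ r (σ (i:ℕ)) := hrm this
      rw [(hσ1 _ hik).1] at h2
      omega
  -- if ι j < I and W (I-1) = J then on path
  have honA : ∀ (i : Fin k) (j : Fin m), ι j < (i:ℕ) → W ((i:ℕ)-1) = (j:ℕ) → OnP r i j := by
    intro i j hij hW
    have hWj : σ ((i:ℕ)-1) - ((i:ℕ)-1) = (j:ℕ) := hW
    have hik : (i:ℕ)-1 < k-1 := by have := i.isLt; omega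
    obtain ⟨hs1, hs2⟩ := hσ1 ((i:ℕ)-1) hik
    have h4 := hrle (σ ((i:ℕ)-1))
    rw [hs1] at h4
    have hjlt := j.isLt
    have hilt := i.isLt
    refine ⟨σ ((i:ℕ)-1) + 1, ?_, ?_, ?_⟩
    · omega
    · rw [hs2]; omega
    · rw [hs2]; omega
  -- the matrix
  set ρ : Fin k → ℝ := fun i => -(∑ s ∈ Finset.range (i:ℕ), (W s : ℝ)) with hρdef
  set γ : Fin m → ℝ := fun j => (∑ s ∈ Finset.range (ι j), (W s : ℝ)) - (ι j : ℝ) * ((j:ℕ) : ℝ) with hγdef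
  set A : Matrix (Fin k) (Fin m) ℝ :=
    Matrix.of fun i j => Real.exp (ρ i + γ j + ((i:ℕ) : ℝ) * ((j:ℕ) : ℝ)) with hAdef
  -- the L-function classification
  have hL : ∀ (i : Fin k) (j : Fin m),
      (OnP r i j → ρ i + γ j + ((i:ℕ) : ℝ) * ((j:ℕ) : ℝ) = 0) ∧
      (¬ OnP r i j → ρ i + γ j + ((i:ℕ) : ℝ) * ((j:ℕ) : ℝ) < 0) := by
    intro i j
    by_cases hon : OnP r i j
    · refine ⟨fun _ => ?_, fun h => absurd hon h⟩
      obtain ⟨t, ht, h1, h2⟩ := hon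
      have hijI : ι j ≤ (i:ℕ) := by
        have := hτmin j t h2 ht
        have h3 : ι j ≤ r t := hrm this
        omega
      have hLe : ρ i + γ j + ((i:ℕ) : ℝ) * ((j:ℕ) : ℝ)
          = (((i:ℕ) : ℝ) - (ι j : ℝ)) * ((j:ℕ) : ℝ) - ∑ s ∈ Finset.Ico (ι j) (i:ℕ), (W s : ℝ) := by
        rw [hρdef, hγdef, Finset.sum_Ico_eq_sub _ hijI]
        ring
      have hWeq : ∀ s ∈ Finset.Ico (ι j) (i:ℕ), (W s : ℝ) = ((j:ℕ) : ℝ) := by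
        intro s hs
        rw [Finset.mem_Ico] at hs
        have hsk : s < k-1 := by have := i.isLt; omega
        have hge := hWge s hsk j hs.1
        have hle' := hWle2 s hsk t (by omega)
        have h5 : W s = (j:ℕ) := by omega
        exact_mod_cast h5
      rw [hLe, Finset.sum_congr rfl hWeq, Finset.sum_const, Nat.card_Ico]
      have : (((i:ℕ) - ι j : ℕ) : ℝ) = ((i:ℕ) : ℝ) - (ι j : ℝ) := by
        rw [Nat.cast_sub hijI]
      rw [nsmul_eq_mul, this]
      ring
    · refine ⟨fun h => absurd h hon, fun _ => ?_⟩
      rcases le_or_gt (ι j) (i:ℕ) with hij | hij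
      · -- case A, off path
        have hlt : ι j < (i:ℕ) := by
          rcases lt_or_eq_of_le hij with h | h
          · exact h
          · exfalso
            exact hon ⟨τ j, hτ2 j, by rw [show r (τ j) = ι j from rfl]; omega, hτ1 j⟩
        have hLe : ρ i + γ j + ((i:ℕ) : ℝ) * ((j:ℕ) : ℝ)
            = (((i:ℕ) : ℝ) - (ι j : ℝ)) * ((j:ℕ) : ℝ) - ∑ s ∈ Finset.Ico (ι j) (i:ℕ), (W s : ℝ) := by
          rw [hρdef, hγdef, Finset.sum_Ico_eq_sub _ (le_of_lt hlt)]
          ring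
        have hsum : (∑ s ∈ Finset.Ico (ι j) (i:ℕ), ((j:ℕ) : ℝ)) < ∑ s ∈ Finset.Ico (ι j) (i:ℕ), (W s : ℝ) := by
          apply Finset.sum_lt_sum
          · intro s hs
            rw [Finset.mem_Ico] at hs
            have hsk : s < k-1 := by have := i.isLt; omega
            exact_mod_cast hWge s hsk j hs.1
          · refine ⟨(i:ℕ)-1, Finset.mem_Ico.2 ⟨by omega, by omega⟩, ?_⟩
            have hsk : (i:ℕ)-1 < k-1 := by have := i.isLt; omega
            have hge := hWge ((i:ℕ)-1) hsk j (by omega)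
            have hne : W ((i:ℕ)-1) ≠ (j:ℕ) := fun h => hon (honA i j hlt h)
            have : (j:ℕ) < W ((i:ℕ)-1) := by omega
            exact_mod_cast this
        rw [hLe]
        rw [Finset.sum_const, Nat.card_Ico, nsmul_eq_mul] at hsum
        have hc : (((i:ℕ) - ι j : ℕ) : ℝ) = ((i:ℕ) : ℝ) - (ι j : ℝ) := Nat.cast_sub (le_of_lt hlt)
        rw [hc] at hsum
        linarith
      · -- case B
        have hLe : ρ i + γ j + ((i:ℕ) : ℝ) * ((j:ℕ) : ℝ)
            = (∑ s ∈ Finset.Ico (i:ℕ) (ι j), (W s : ℝ)) - ((ι j : ℝ) - ((i:ℕ) : ℝ)) * ((j:ℕ) : ℝ) := by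
          rw [hρdef, hγdef, Finset.sum_Ico_eq_sub _ (le_of_lt hij)]
          ring
        have hsum : (∑ s ∈ Finset.Ico (i:ℕ) (ι j), (W s : ℝ)) < ∑ s ∈ Finset.Ico (i:ℕ) (ι j), ((j:ℕ) : ℝ) := by
          apply Finset.sum_lt_sum
          · intro s hs
            rw [Finset.mem_Ico] at hs
            have hsk : s < k-1 := by have := hι_le j; omega
            exact_mod_cast hWle s hsk j hs.2
          · refine ⟨(i:ℕ), Finset.mem_Ico.2 ⟨le_rfl, hij⟩, ?_⟩
            exact_mod_cast hWB i j hij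
        rw [hLe]
        rw [Finset.sum_const, Nat.card_Ico, nsmul_eq_mul] at hsum
        have hc : ((ι j - (i:ℕ) : ℕ) : ℝ) = (ι j : ℝ) - ((i:ℕ) : ℝ) := Nat.cast_sub (le_of_lt hij)
        rw [hc] at hsum
        linarith
  refine ⟨A, 1, ?_, ?_, ?_⟩
  · -- total positivity
    intro n f g hf hg
    have hsub : A.submatrix f g = Matrix.of fun a b => Real.exp (ρ (f a)) *
        (Matrix.of (fun a b : Fin n => Real.exp (γ (g b)) *
          (Matrix.of (fun a b : Fin n => Real.exp ((((f a):ℕ) : ℝ) * (((g b):ℕ) : ℝ))) a b)) a b) := by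
      ext a b
      simp only [Matrix.submatrix_apply, hAdef, Matrix.of_apply, ← Real.exp_add]
      congr 1
      ring
    rw [hsub, Matrix.det_mul_column, Matrix.det_mul_row]
    have hξ : StrictMono (fun a : Fin n => (((f a):ℕ) : ℝ)) := by
      intro a b hab
      have := hf hab
      rw [Fin.lt_def] at this
      show (((f a):ℕ):ℝ) < (((f b):ℕ):ℝ)
      exact_mod_cast this
    have hε : StrictMono (fun b : Fin n => (((g b):ℕ) : ℝ)) := by
      intro a b hab
      have := hg hab
      rw [Fin.lt_def] at this
      show (((g a):ℕ):ℝ) < (((g b):ℕ):ℝ)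
      exact_mod_cast this
    have hgv := gv_pos n _ _ hξ hε
    apply mul_pos (Finset.prod_pos (fun a _ => Real.exp_pos _))
    exact mul_pos (Finset.prod_pos (fun a _ => Real.exp_pos _)) hgv
  · intro p hp
    have hon := (mem_Epf_onP hk hm hr p).1 hp
    show Real.exp _ = 1
    rw [(hL p.1 p.2).1 hon, Real.exp_zero]
  · intro p hp
    have hon := fun h => hp ((mem_Epf_onP hk hm hr p).2 h)
    show Real.exp _ < 1
    rw [show (1:ℝ) = Real.exp 0 by rw [Real.exp_zero]]
    exact Real.exp_lt_exp.2 ((hL p.1 p.2).2 hon)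

end Main

theorem maximal_largest_entries (k m : ℕ) (hk : 1 ≤ k) (hm : 1 ≤ m) :
    (∀ E : Finset (Fin k × Fin m), MaxArrLargestEntries k m E → E.card = k + m - 1) ∧
    (∀ E : Finset (Fin k × Fin m), MaxArrLargestEntries k m E ↔ IsLatticePathSet k m E) ∧
    Nat.card {E : Finset (Fin k × Fin m) // MaxArrLargestEntries k m E} =
      (k + m - 2).choose (k - 1) := by
  have hk' : 0 < k := hk
  have hm' : 0 < m := hm
  have hiff : ∀ E : Finset (Fin k × Fin m), MaxArrLargestEntries k m E ↔ IsLatticePathSet k m E := by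
    intro E
    constructor
    · rintro ⟨hE, hmax⟩
      obtain ⟨r, hr, hsub⟩ := chain_ext hk' hm' (arr_chain hE)
      have hEeq : E = Epf hk' hm' r := hmax _ (arr_Epf hk' hm' hr) hsub
      rw [hEeq]
      exact Epf_isPath hk' hm' hr
    · intro hL
      obtain ⟨r, hr, hEeq⟩ := path_to_pf hk' hm' hL
      constructor
      · rw [hEeq]; exact arr_Epf hk' hm' hr
      · intro E' hE' hsub
        rw [hEeq] at hsub ⊢
        exact (Epf_max hk' hm' hr hsub (arr_chain hE')).symm
  refine ⟨?_, hiff, ?_⟩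
  · intro E hE
    obtain ⟨r, hr, hEeq⟩ := path_to_pf hk' hm' ((hiff E).1 hE)
    rw [hEeq, Epf_card hk' hm' hr]
  · set Φ : {S : Finset (Fin (k+m-2)) // S.card = k-1} →
        {E : Finset (Fin k × Fin m) // MaxArrLargestEntries k m E} :=
      fun S => ⟨Epf hk' hm' (rOfS S.1), (hiff _).2 (Epf_isPath hk' hm' (rOfS_pf hk' hm' S.2))⟩
      with hΦ
    have hinj : Function.Injective Φ := by
      intro S S' h
      have heq : Epf hk' hm' (rOfS S.1) = Epf hk' hm' (rOfS S'.1) := congrArg Subtype.val h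
      have hr1 := rOfS_pf hk' hm' S.2
      have hr2 := rOfS_pf hk' hm' S'.2
      have hro := Epf_inj hk' hm' hr1 hr2 heq
      apply Subtype.ext
      ext s
      rw [rOfS_mem_iff (S := S.1) s, rOfS_mem_iff (S := S'.1) s]
      have h1 := hro ((s:ℕ)+1) (by have := s.isLt; omega)
      have h2 := hro (s:ℕ) (by have := s.isLt; omega)
      rw [h1, h2]
    have hsurj : Function.Surjective Φ := by
      rintro ⟨E, hE⟩
      obtain ⟨r, hr, hEeq⟩ := path_to_pf hk' hm' ((hiff E).1 hE)
      set S := Finset.univ.filter (fun s : Fin (k+m-2) => r ((s:ℕ)+1) = r (s:ℕ)+1) with hS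
      have hro := rOfS_of hk' hm' hr
      have hcard : S.card = k-1 := by
        have h1 := hro (k+m-2) le_rfl
        rw [hr.2.2] at h1
        unfold rOfS at h1
        rw [Finset.filter_true_of_mem (fun s _ => s.isLt)] at h1
        exact h1
      refine ⟨⟨S, hcard⟩, ?_⟩
      apply Subtype.ext
      show Epf hk' hm' (rOfS S) = E
      rw [hEeq]
      exact pf_eq_on hk' hm' (fun t ht => hro t ht)
    calc Nat.card {E : Finset (Fin k × Fin m) // MaxArrLargestEntries k m E}
        = Nat.card {S : Finset (Fin (k+m-2)) // S.card = k-1} :=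
          Nat.card_congr (Equiv.ofBijective Φ ⟨hinj, hsurj⟩).symm
      _ = Fintype.card {S : Finset (Fin (k+m-2)) // S.card = k-1} := Nat.card_eq_fintype_card
      _ = (k+m-2).choose (k-1) := by rw [Fintype.card_finset_len, Fintype.card_fin]

end Stmt16
end
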